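/- arXiv:0809.0439 — 7 statements merged into one kernel-verified Lean document; each statement's English description precedes it below -/
import Mathlib

section
/- Let (Ω_j)_{j≥1} be open subsets of ℂ with Ω_j ⊆ Ω_{j+1} for all j and ⋃_j Ω_j = ℂ, and assume that for each j the complement ℂ ∖ Ω_j is either empty or connected and unbounded. For each j let Φ_j be holomorphic on Ω_j. Then there exists a function Φ holomorphic on Ω₁ such that for every n ≥ 1 there is a function g_n holomorphic on Ω_{n+1} with Φ(z) = Φ₁(z) + ⋯ + Φ_n(z) + g_n(z) for all z ∈ Ω₁; that is, Φ − Σ_{j=1}^n Φ_j extends holomorphically from Ω₁ to Ω_{n+1} for every n. -/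
open Metric Filter Finset

/-- Taylor polynomial approximation on a closed ball inside the domain. -/
theorem taylor_approx {f : ℂ → ℂ} {U : Set ℂ} (hU : IsOpen U)
    (hf : DifferentiableOn ℂ f U) {c : ℝ} (hc : 0 ≤ c)
    (hsub : closedBall (0:ℂ) c ⊆ U) {ε : ℝ} (hε : 0 < ε) :
    ∃ p : ℂ → ℂ, Differentiable ℂ p ∧ ∀ z ∈ closedBall (0:ℂ) c, ‖f z - p z‖ ≤ ε := by
  obtain ⟨δ, hδ, hth⟩ :=
    (isCompact_closedBall (0:ℂ) c).exists_cthickening_subset_open hU hsub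
  have hcb : closedBall (0:ℂ) (c + δ) ⊆ U := by
    rw [add_comm c δ, ← cthickening_closedBall hδ.le hc]; exact hth
  set R : NNReal := ⟨c + δ, by positivity⟩ with hR
  have hRpos : 0 < R := by
    rw [← NNReal.coe_lt_coe]; show (0:ℝ) < c + δ; positivity
  have hdiff : DifferentiableOn ℂ f (closedBall (0:ℂ) R) := hf.mono hcb
  have hps := hdiff.hasFPowerSeriesOnBall hRpos
  set r' : NNReal := ⟨c + δ/2, by positivity⟩ with hr'
  have hlt : (r' : ENNReal) < (R : ENNReal) := by
    rw [ENNReal.coe_lt_coe, ← NNReal.coe_lt_coe]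
    show c + δ/2 < c + δ
    linarith
  have hconv := hps.tendstoUniformlyOn hlt
  rw [Metric.tendstoUniformlyOn_iff] at hconv
  obtain ⟨N, hN⟩ := (hconv ε hε).exists
  set q := cauchyPowerSeries f 0 R
  refine ⟨fun y => q.partialSum N y, ?_, ?_⟩
  · have : ∀ y : ℂ, q.partialSum N y = ∑ k ∈ Finset.range N, y ^ k • q.coeff k := by
      intro y
      simp [FormalMultilinearSeries.partialSum, FormalMultilinearSeries.apply_eq_pow_smul_coeff]
    simp only [this]
    exact Differentiable.fun_sum fun k _ => (differentiable_pow (𝕜 := ℂ) k).smul_const _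
  · intro z hz
    have hz' : z ∈ ball (0:ℂ) (r' : ℝ) := by
      rw [mem_ball_zero_iff]
      have := mem_closedBall_zero_iff.1 hz
      show ‖z‖ < c + δ/2
      linarith
    have := hN z hz'
    rw [zero_add, dist_eq_norm] at this
    exact this.le

/-- Mittag-Leffler sum (CNP Pré I.4.1): given holomorphic functions Φⱼ on an
increasing exhaustion of ℂ by open sets with connected unbounded complements,
there is a function Φ holomorphic on the first set such that the tails
Φ − Σ_{j≤n} Φⱼ extend holomorphically to later sets of the exhaustion. -/
theorem stmt_8 (Ω : ℕ → Set ℂ) (hopen : ∀ j, IsOpen (Ω j))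
    (hmono : ∀ j, Ω j ⊆ Ω (j + 1)) (hunion : ⋃ j, Ω j = Set.univ)
    (hcompl : ∀ j, (Ω j)ᶜ = ∅ ∨ (IsConnected (Ω j)ᶜ ∧ ¬ Bornology.IsBounded (Ω j)ᶜ))
    (Φs : ℕ → ℂ → ℂ) (hΦs : ∀ j, DifferentiableOn ℂ (Φs j) (Ω j)) :
    ∃ Φ : ℂ → ℂ, DifferentiableOn ℂ Φ (Ω 0) ∧
      ∀ n : ℕ, ∃ g : ℂ → ℂ, DifferentiableOn ℂ g (Ω (n + 1)) ∧
        ∀ z ∈ Ω 0, Φ z = (∑ j ∈ Finset.range (n + 1), Φs j z) + g z := by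
  classical
  have hΩ : Monotone Ω := monotone_nat_of_le_succ hmono
  -- every closed ball is contained in some Ω m
  have hball : ∀ k : ℕ, ∃ m : ℕ, closedBall (0:ℂ) (k:ℝ) ⊆ Ω m := by
    intro k
    apply (isCompact_closedBall (0:ℂ) (k:ℝ)).elim_directed_cover Ω hopen
    · rw [hunion]; exact Set.subset_univ _
    · exact hΩ.directed_le
  choose M hM using hball
  -- a monotone index function: closedBall 0 k ⊆ Ω (ub k), k ≤ ub k
  set ub : ℕ → ℕ := fun k => max k ((Finset.range (k+1)).sup M) with hub_def
  have hub_self : ∀ k, k ≤ ub k := fun k => le_max_left _ _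
  have hub_mono : Monotone ub := by
    intro a b hab
    apply max_le_max hab
    exact Finset.sup_mono (Finset.range_subset_range.2 (by omega))
  have hub : ∀ k : ℕ, closedBall (0:ℂ) (k:ℝ) ⊆ Ω (ub k) := by
    intro k
    refine (hM k).trans (hΩ ?_)
    exact le_trans (Finset.le_sup (Finset.mem_range.2 (Nat.lt_succ_self k))) (le_max_right _ _)
  -- choose entire approximants
  have pexists : ∀ j : ℕ, ∃ p : ℂ → ℂ, Differentiable ℂ p ∧
      ∀ k : ℕ, ub k ≤ j → ∀ z ∈ closedBall (0:ℂ) (k:ℝ), ‖Φs j z - p z‖ ≤ (1/2:ℝ)^j := by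
    intro j
    by_cases h : ∃ k : ℕ, ub k ≤ j
    · have hbdd : BddAbove {k : ℕ | ub k ≤ j} :=
        ⟨j, fun k hk => le_trans (hub_self k) hk⟩
      set k0 := sSup {k : ℕ | ub k ≤ j} with hk0
      have hk0mem : ub k0 ≤ j := Nat.sSup_mem h hbdd
      have hsub : closedBall (0:ℂ) (k0:ℝ) ⊆ Ω j := (hub k0).trans (hΩ hk0mem)
      obtain ⟨p, hp, hpb⟩ := taylor_approx (hopen j) (hΦs j) (by positivity) hsub
        (ε := (1/2:ℝ)^j) (by positivity)
      refine ⟨p, hp, fun k hk z hz => hpb z ?_⟩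
      have : k ≤ k0 := le_csSup hbdd hk
      exact closedBall_subset_closedBall (by exact_mod_cast this) hz
    · exact ⟨0, differentiable_const 0, fun k hk => absurd ⟨k, hk⟩ h⟩
  choose p hpdiff hpbound using pexists
  -- global summability
  have hsummable : ∀ z : ℂ, Summable (fun j => Φs j z - p j z) := by
    intro z
    apply Summable.of_norm_bounded_eventually_nat (g := fun j => (1/2:ℝ)^j)
      (summable_geometric_of_lt_one (by norm_num) (by norm_num))
    filter_upwards [eventually_ge_atTop (ub ⌈‖z‖⌉₊)] with j hj
    exact hpbound j ⌈‖z‖⌉₊ hj z (mem_closedBall_zero_iff.2 (Nat.le_ceil _))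
  -- main differentiability lemma
  have main : ∀ m : ℕ, DifferentiableOn ℂ
      (fun z => ∑' j, (Φs (j+m) z - p (j+m) z)) (Ω m) := by
    intro m z hz
    set R : ℕ := ⌈‖z‖⌉₊ + 1 with hRdef
    set J : ℕ := ub R with hJdef
    set W := Ω m ∩ ball (0:ℂ) (R:ℝ) with hWdef
    have hWopen : IsOpen W := (hopen m).inter isOpen_ball
    have hzW : z ∈ W := by
      refine ⟨hz, mem_ball_zero_iff.2 ?_⟩
      have := Nat.le_ceil ‖z‖
      rw [hRdef]
      push_cast
      linarith
    have hWcb : ∀ w ∈ W, w ∈ closedBall (0:ℂ) (R:ℝ) :=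
      fun w hw => ball_subset_closedBall hw.2
    have hWU : ∀ i : ℕ, m ≤ i → W ⊆ Ω i := fun i hi =>
      (Set.inter_subset_left).trans (hΩ hi)
    have hWdiff : DifferentiableOn ℂ (fun w => ∑' j, (Φs (j+m) w - p (j+m) w)) W := by
      have heq : ∀ w ∈ W, ∑' j, (Φs (j+m) w - p (j+m) w)
          = (∑ j ∈ Finset.range J, (Φs (j+m) w - p (j+m) w))
            + ∑' j, (Φs (j+J+m) w - p (j+J+m) w) := by
        intro w hw
        have hs : Summable fun i => Φs (i+m) w - p (i+m) w :=
          (summable_nat_add_iff m).2 (hsummable w)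
        rw [← Summable.sum_add_tsum_nat_add J hs]
      refine DifferentiableOn.congr ?_ heq
      apply DifferentiableOn.add
      · apply DifferentiableOn.fun_sum
        intro j _
        exact ((hΦs (j+m)).mono (hWU (j+m) (by omega))).sub
          ((hpdiff (j+m)).differentiableOn)
      · apply Complex.differentiableOn_tsum_of_summable_norm
          (u := fun j => (1/2:ℝ)^(j+J+m))
        · apply Summable.congr
            (f := fun j => (1/2:ℝ)^j * ((1/2:ℝ)^J * (1/2:ℝ)^m))
          · exact (summable_geometric_of_lt_one (by norm_num) (by norm_num)).mul_right _
          · intro j; rw [pow_add, pow_add]; ring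
        · intro i
          exact ((hΦs (i+J+m)).mono (hWU (i+J+m) (by omega))).sub
            ((hpdiff (i+J+m)).differentiableOn)
        · exact hWopen
        · intro i w hw
          exact hpbound (i+J+m) R (by omega) w (hWcb w hw)
    exact (hWdiff.differentiableAt (hWopen.mem_nhds hzW)).differentiableWithinAt
  -- assemble
  refine ⟨fun z => ∑' j, (Φs j z - p j z), ?_, ?_⟩
  · have h0 := main 0
    simpa only [Nat.add_zero] using h0
  · intro n
    refine ⟨fun z => (∑' j, (Φs (j+(n+1)) z - p (j+(n+1)) z))
        - ∑ j ∈ Finset.range (n+1), p j z, ?_, ?_⟩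
    · exact (main (n+1)).sub
        ((Differentiable.fun_sum fun j _ => hpdiff j).differentiableOn)
    · intro z hz
      have hs := hsummable z
      have hsplit := Summable.sum_add_tsum_nat_add (n+1) hs
      show (∑' j, (Φs j z - p j z)) = ∑ j ∈ Finset.range (n+1), Φs j z
        + ((∑' j, (Φs (j+(n+1)) z - p (j+(n+1)) z)) - ∑ j ∈ Finset.range (n+1), p j z)
      rw [← hsplit, Finset.sum_sub_distrib]
      ring
end

section
/- Let Φ : ℂ → ℂ be entire with |Φ(ξ)| ≤ C e^{K|ξ|} for all ξ ∈ ℂ, where C, K ≥ 0. Let ξ₀ ∈ ℂ, let θ₁ < θ₂ with θ₂ − θ₁ < π, and let x ∈ ℂ satisfy Re(x e^{iθ}) > K for every θ ∈ [θ₁, θ₂]. Then the two ray integrals ∫_0^∞ e^{−x(ξ₀ + t e^{iθ_k})} Φ(ξ₀ + t e^{iθ_k}) e^{iθ_k} dt (k = 1, 2) converge absolutely and are equal. Consequently the Laplace integral of an entire function of exponential type along the boundary contour of a sector vanishes. -/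
open MeasureTheory Set Filter Complex Topology

/-- The Laplace integral of an entire function of exponential type along the
boundary contour of a sector vanishes: the two ray integrals converge
absolutely and are equal. -/
theorem stmt_9 (Φ : ℂ → ℂ) (hΦ : Differentiable ℂ Φ)
    (C K : ℝ) (hC : 0 ≤ C) (hK : 0 ≤ K)
    (hbd : ∀ ξ : ℂ, ‖Φ ξ‖ ≤ C * Real.exp (K * ‖ξ‖))
    (ξ₀ : ℂ) (θ₁ θ₂ : ℝ) (h12 : θ₁ < θ₂) (hap : θ₂ - θ₁ < Real.pi)
    (x : ℂ) (hx : ∀ θ ∈ Set.Icc θ₁ θ₂, K < (x * Complex.exp ((θ : ℂ) * Complex.I)).re) :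
    IntegrableOn (fun t : ℝ =>
      Complex.exp (-x * (ξ₀ + (t : ℂ) * Complex.exp ((θ₁ : ℂ) * Complex.I))) *
        Φ (ξ₀ + (t : ℂ) * Complex.exp ((θ₁ : ℂ) * Complex.I)) *
        Complex.exp ((θ₁ : ℂ) * Complex.I)) (Set.Ioi 0) ∧
    IntegrableOn (fun t : ℝ =>
      Complex.exp (-x * (ξ₀ + (t : ℂ) * Complex.exp ((θ₂ : ℂ) * Complex.I))) *
        Φ (ξ₀ + (t : ℂ) * Complex.exp ((θ₂ : ℂ) * Complex.I)) *
        Complex.exp ((θ₂ : ℂ) * Complex.I)) (Set.Ioi 0) ∧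
    (∫ t : ℝ in Set.Ioi 0,
      Complex.exp (-x * (ξ₀ + (t : ℂ) * Complex.exp ((θ₁ : ℂ) * Complex.I))) *
        Φ (ξ₀ + (t : ℂ) * Complex.exp ((θ₁ : ℂ) * Complex.I)) *
        Complex.exp ((θ₁ : ℂ) * Complex.I)) =
    ∫ t : ℝ in Set.Ioi 0,
      Complex.exp (-x * (ξ₀ + (t : ℂ) * Complex.exp ((θ₂ : ℂ) * Complex.I))) *
        Φ (ξ₀ + (t : ℂ) * Complex.exp ((θ₂ : ℂ) * Complex.I)) *
        Complex.exp ((θ₂ : ℂ) * Complex.I) := by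
  -- minimum of θ ↦ (x e^{iθ}).re on [θ₁, θ₂]
  obtain ⟨θ₀, hθ₀mem, hθ₀min⟩ :=
    isCompact_Icc.exists_isMinOn (nonempty_Icc.2 h12.le)
      (show Continuous fun θ : ℝ => (x * Complex.exp ((θ:ℂ) * Complex.I)).re by fun_prop).continuousOn
  set a : ℝ := (x * Complex.exp ((θ₀:ℂ) * Complex.I)).re with ha
  have haK : K < a := hx θ₀ hθ₀mem
  set c : ℝ := a - K with hc
  have hcpos : 0 < c := by simp [hc, haK]
  set C₁ : ℝ := C * Real.exp ((-(x * ξ₀)).re + K * ‖ξ₀‖) with hC₁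
  have hC₁nn : 0 ≤ C₁ := mul_nonneg hC (Real.exp_pos _).le
  -- unit modulus of e^{iθ}
  have habsE : ∀ θ : ℝ, ‖Complex.exp ((θ:ℂ) * Complex.I)‖ = 1 := by
    intro θ
    rw [Complex.norm_exp]
    simp [Complex.mul_re]
  -- the key pointwise bound
  have hg : ∀ (t : ℝ), 0 ≤ t → ∀ θ ∈ Icc θ₁ θ₂,
      ‖Complex.exp (-x * (ξ₀ + (t:ℂ) * Complex.exp ((θ:ℂ) * Complex.I))) *
        Φ (ξ₀ + (t:ℂ) * Complex.exp ((θ:ℂ) * Complex.I))‖ ≤ C₁ * Real.exp (-c * t) := by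
    intro t ht θ hθ
    set E : ℂ := Complex.exp ((θ:ℂ) * Complex.I) with hEdef
    set r : ℝ := (x * E).re with hr
    have har : a ≤ r := hθ₀min hθ
    have h1 : (-x * (ξ₀ + (t:ℂ) * E)) = -(x * ξ₀) + ((-t : ℝ) : ℂ) * (x * E) := by
      push_cast; ring
    have h2 : (-x * (ξ₀ + (t:ℂ) * E)).re = (-(x * ξ₀)).re + (-t) * r := by
      rw [h1, Complex.add_re, Complex.re_ofReal_mul]
    have h3 : ‖ξ₀ + (t:ℂ) * E‖ ≤ ‖ξ₀‖ + t := by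
      refine (norm_add_le _ _).trans ?_
      rw [norm_mul, habsE θ, mul_one, Complex.norm_real, Real.norm_of_nonneg ht]
    have h4 : ‖Φ (ξ₀ + (t:ℂ) * E)‖ ≤ C * Real.exp (K * ‖ξ₀‖ + K * t) := by
      refine (hbd _).trans ?_
      refine mul_le_mul_of_nonneg_left (Real.exp_le_exp.2 ?_) hC
      nlinarith [h3]
    have h5 : -t * r + K * t ≤ -c * t := by rw [hc]; nlinarith [mul_le_mul_of_nonneg_left har ht]
    rw [norm_mul, Complex.norm_exp, h2]
    calc Real.exp ((-(x * ξ₀)).re + (-t) * r) * ‖Φ (ξ₀ + (t:ℂ) * E)‖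
        ≤ Real.exp ((-(x * ξ₀)).re + (-t) * r) * (C * Real.exp (K * ‖ξ₀‖ + K * t)) :=
          mul_le_mul_of_nonneg_left h4 (Real.exp_pos _).le
      _ = C₁ * Real.exp ((-t) * r + K * t) := by
          rw [hC₁]; simp only [Real.exp_add]; ring
      _ ≤ C₁ * Real.exp (-c * t) :=
          mul_le_mul_of_nonneg_left (Real.exp_le_exp.2 (by nlinarith [h5])) hC₁nn
  -- integrability on each ray
  have hray : ∀ θ ∈ Icc θ₁ θ₂, IntegrableOn (fun t : ℝ =>
      Complex.exp (-x * (ξ₀ + (t:ℂ) * Complex.exp ((θ:ℂ) * Complex.I))) *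
        Φ (ξ₀ + (t:ℂ) * Complex.exp ((θ:ℂ) * Complex.I)) *
        Complex.exp ((θ:ℂ) * Complex.I)) (Ioi 0) := by
    intro θ hθ
    have hΦc := hΦ.continuous
    have hcont : Continuous fun t : ℝ =>
        Complex.exp (-x * (ξ₀ + (t:ℂ) * Complex.exp ((θ:ℂ) * Complex.I))) *
          Φ (ξ₀ + (t:ℂ) * Complex.exp ((θ:ℂ) * Complex.I)) *
          Complex.exp ((θ:ℂ) * Complex.I) := by fun_prop
    refine ((exp_neg_integrableOn_Ioi 0 hcpos).const_mul C₁).mono'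
      hcont.aestronglyMeasurable.restrict ?_
    filter_upwards [ae_restrict_mem measurableSet_Ioi] with t ht
    rw [norm_mul, habsE θ, mul_one]
    exact hg t (le_of_lt ht) θ hθ
  -- the entire function on the strip
  set H : ℂ → ℂ := fun w => Complex.exp (-x * (ξ₀ + Complex.exp w)) * Φ (ξ₀ + Complex.exp w) *
    Complex.exp w with hH
  have hHd : Differentiable ℂ H := by rw [hH]; fun_prop
  have hexp_eq : ∀ (s θ : ℝ), Complex.exp ((s:ℂ) + (θ:ℂ) * Complex.I)
      = ((Real.exp s : ℝ) : ℂ) * Complex.exp ((θ:ℂ) * Complex.I) := by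
    intro s θ
    rw [Complex.exp_add, Complex.ofReal_exp]
  -- pointwise equality between substituted ray integrand and H on lines
  have hpt : ∀ (θ s : ℝ), |Real.exp s| • (Complex.exp (-x * (ξ₀ + ((Real.exp s : ℝ):ℂ) *
      Complex.exp ((θ:ℂ) * Complex.I))) * Φ (ξ₀ + ((Real.exp s : ℝ):ℂ) *
      Complex.exp ((θ:ℂ) * Complex.I)) * Complex.exp ((θ:ℂ) * Complex.I))
      = H ((s:ℂ) + (θ:ℂ) * Complex.I) := by
    intro θ s
    rw [abs_of_pos (Real.exp_pos s), Complex.real_smul, hH]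
    simp only [hexp_eq s θ]
    ring
  have himg : Real.exp '' univ = Ioi (0:ℝ) := by rw [image_univ, Real.range_exp]
  have hderiv : ∀ y ∈ (univ : Set ℝ), HasDerivWithinAt Real.exp (Real.exp y) univ y :=
    fun y _ => (Real.hasDerivAt_exp y).hasDerivWithinAt
  -- substitution t = e^s : ray integrals equal line integrals of H
  have hsub : ∀ θ : ℝ, (∫ t : ℝ in Ioi 0,
      Complex.exp (-x * (ξ₀ + (t:ℂ) * Complex.exp ((θ:ℂ) * Complex.I))) *
        Φ (ξ₀ + (t:ℂ) * Complex.exp ((θ:ℂ) * Complex.I)) *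
        Complex.exp ((θ:ℂ) * Complex.I))
      = ∫ s : ℝ, H ((s:ℂ) + (θ:ℂ) * Complex.I) := by
    intro θ
    rw [← himg, integral_image_eq_integral_abs_deriv_smul MeasurableSet.univ hderiv
      Real.exp_injective.injOn _, setIntegral_univ]
    exact integral_congr_ae (Eventually.of_forall fun s => hpt θ s)
  -- integrability of H on horizontal lines
  have hline : ∀ θ ∈ Icc θ₁ θ₂, Integrable (fun s : ℝ => H ((s:ℂ) + (θ:ℂ) * Complex.I)) := by
    intro θ hθ
    have := (integrableOn_image_iff_integrableOn_abs_deriv_smul MeasurableSet.univ hderiv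
      Real.exp_injective.injOn (fun t : ℝ =>
        Complex.exp (-x * (ξ₀ + (t:ℂ) * Complex.exp ((θ:ℂ) * Complex.I))) *
          Φ (ξ₀ + (t:ℂ) * Complex.exp ((θ:ℂ) * Complex.I)) *
          Complex.exp ((θ:ℂ) * Complex.I))).1 (by rw [himg]; exact hray θ hθ)
    rw [integrableOn_univ] at this
    exact this.congr (Eventually.of_forall fun s => hpt θ s)
  -- bound for H on the strip
  have hHb : ∀ (σ y : ℝ), y ∈ Icc θ₁ θ₂ →
      ‖H ((σ:ℂ) + (y:ℂ) * Complex.I)‖ ≤ C₁ * Real.exp (-c * Real.exp σ) * Real.exp σ := by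
    intro σ y hy
    rw [hH]
    simp only [hexp_eq σ y]
    rw [norm_mul]
    have habs3 : ‖((Real.exp σ : ℝ) : ℂ) * Complex.exp ((y:ℂ) * Complex.I)‖
        = Real.exp σ := by
      rw [norm_mul, Complex.norm_real, habsE y, mul_one, Real.norm_of_nonneg (Real.exp_pos σ).le]
    rw [habs3]
    exact mul_le_mul_of_nonneg_right (hg (Real.exp σ) (Real.exp_pos σ).le y hy)
      (Real.exp_pos σ).le
  -- the vertical bound function tends to zero at both ends
  set B : ℝ → ℝ := fun σ => C₁ * Real.exp (-c * Real.exp σ) * Real.exp σ with hB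
  have hBeq : B = fun σ => (C₁ / c) * ((c * Real.exp σ) * Real.exp (-(c * Real.exp σ))) := by
    funext σ
    rw [hB]
    field_simp
  have hBtop : Tendsto B atTop (𝓝 0) := by
    rw [hBeq]
    have h1 : Tendsto (fun σ : ℝ => c * Real.exp σ) atTop atTop :=
      Tendsto.const_mul_atTop hcpos Real.tendsto_exp_atTop
    have h2 : Tendsto (fun u : ℝ => u * Real.exp (-u)) atTop (𝓝 0) := by
      simpa using Real.tendsto_pow_mul_exp_neg_atTop_nhds_zero 1
    simpa using (h2.comp h1).const_mul (C₁ / c)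
  have hBbot : Tendsto B atBot (𝓝 0) := by
    rw [hBeq]
    have h1 : Tendsto (fun σ : ℝ => c * Real.exp σ) atBot (𝓝 0) := by
      simpa using Real.tendsto_exp_atBot.const_mul c
    have h2 : Continuous (fun u : ℝ => u * Real.exp (-u)) := by fun_prop
    have h3 : Tendsto (fun σ : ℝ => (c * Real.exp σ) * Real.exp (-(c * Real.exp σ))) atBot (𝓝 0) := by
      simpa [Function.comp_def] using (h2.tendsto 0).comp h1
    simpa using h3.const_mul (C₁ / c)
  -- rectangle contour identity
  have hrect : ∀ S : ℝ,
      (∫ s : ℝ in (-S)..S, H ((s:ℂ) + (θ₁:ℂ) * Complex.I))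
      - (∫ s : ℝ in (-S)..S, H ((s:ℂ) + (θ₂:ℂ) * Complex.I))
      + Complex.I • (∫ y : ℝ in θ₁..θ₂, H ((S:ℂ) + (y:ℂ) * Complex.I))
      - Complex.I • (∫ y : ℝ in θ₁..θ₂, H ((-S:ℂ) + (y:ℂ) * Complex.I)) = 0 := by
    intro S
    have := Complex.integral_boundary_rect_eq_zero_of_differentiableOn H
      (-(S:ℂ) + (θ₁:ℂ) * Complex.I) ((S:ℂ) + (θ₂:ℂ) * Complex.I) hHd.differentiableOn
    simpa only [Complex.add_re, Complex.add_im, Complex.neg_re, Complex.neg_im,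
      Complex.ofReal_re, Complex.ofReal_im, Complex.mul_re, Complex.mul_im,
      Complex.I_re, Complex.I_im, mul_zero, mul_one, zero_mul, sub_zero, zero_sub,
      add_zero, zero_add, neg_zero, Complex.ofReal_neg] using this
  -- limits of the horizontal integrals
  have hmem1 : θ₁ ∈ Icc θ₁ θ₂ := ⟨le_refl _, h12.le⟩
  have hmem2 : θ₂ ∈ Icc θ₁ θ₂ := ⟨h12.le, le_refl _⟩
  have hlim1 : Tendsto (fun S : ℝ => ∫ s : ℝ in (-S)..S, H ((s:ℂ) + (θ₁:ℂ) * Complex.I)) atTop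
      (𝓝 (∫ s : ℝ, H ((s:ℂ) + (θ₁:ℂ) * Complex.I))) :=
    intervalIntegral_tendsto_integral (hline θ₁ hmem1) tendsto_neg_atTop_atBot tendsto_id
  have hlim2 : Tendsto (fun S : ℝ => ∫ s : ℝ in (-S)..S, H ((s:ℂ) + (θ₂:ℂ) * Complex.I)) atTop
      (𝓝 (∫ s : ℝ, H ((s:ℂ) + (θ₂:ℂ) * Complex.I))) :=
    intervalIntegral_tendsto_integral (hline θ₂ hmem2) tendsto_neg_atTop_atBot tendsto_id
  -- vertical integrals tend to zero
  have hvbound : ∀ (σ : ℝ), ‖∫ y : ℝ in θ₁..θ₂, H ((σ:ℂ) + (y:ℂ) * Complex.I)‖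
      ≤ B σ * |θ₂ - θ₁| := by
    intro σ
    refine intervalIntegral.norm_integral_le_of_norm_le_const ?_
    intro y hy
    rw [uIoc_of_le h12.le] at hy
    exact hHb σ y ⟨hy.1.le, hy.2⟩
  have hvert1 : Tendsto (fun S : ℝ => Complex.I • ∫ y : ℝ in θ₁..θ₂,
      H ((S:ℂ) + (y:ℂ) * Complex.I)) atTop (𝓝 0) := by
    have h0 : Tendsto (fun S : ℝ => ∫ y : ℝ in θ₁..θ₂, H ((S:ℂ) + (y:ℂ) * Complex.I)) atTop
        (𝓝 0) := by
      have hb := hBtop.mul_const |θ₂ - θ₁|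
      rw [zero_mul] at hb
      exact squeeze_zero_norm (fun S => hvbound S) hb
    simpa using h0.const_smul Complex.I
  have hvert2 : Tendsto (fun S : ℝ => Complex.I • ∫ y : ℝ in θ₁..θ₂,
      H ((-S:ℂ) + (y:ℂ) * Complex.I)) atTop (𝓝 0) := by
    have h0 : Tendsto (fun S : ℝ => ∫ y : ℝ in θ₁..θ₂, H ((-S:ℂ) + (y:ℂ) * Complex.I)) atTop
        (𝓝 0) := by
      refine squeeze_zero_norm (a := fun S => B (-S) * |θ₂ - θ₁|) (fun S => ?_) ?_
      · have := hvbound (-S)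
        simpa using this
      · have hb : Tendsto (fun S : ℝ => B (-S)) atTop (𝓝 0) :=
          hBbot.comp tendsto_neg_atTop_atBot
        have hb2 := hb.mul_const |θ₂ - θ₁|
        rw [zero_mul] at hb2
        exact hb2
    simpa using h0.const_smul Complex.I
  -- combine: the two line integrals are equal
  have hcomb : Tendsto (fun S : ℝ =>
      (∫ s : ℝ in (-S)..S, H ((s:ℂ) + (θ₁:ℂ) * Complex.I))
      - (∫ s : ℝ in (-S)..S, H ((s:ℂ) + (θ₂:ℂ) * Complex.I))
      + Complex.I • (∫ y : ℝ in θ₁..θ₂, H ((S:ℂ) + (y:ℂ) * Complex.I))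
      - Complex.I • (∫ y : ℝ in θ₁..θ₂, H ((-S:ℂ) + (y:ℂ) * Complex.I))) atTop
      (𝓝 ((∫ s : ℝ, H ((s:ℂ) + (θ₁:ℂ) * Complex.I))
        - (∫ s : ℝ, H ((s:ℂ) + (θ₂:ℂ) * Complex.I)) + 0 - 0)) :=
    ((hlim1.sub hlim2).add hvert1).sub hvert2
  have hconst : Tendsto (fun S : ℝ =>
      (∫ s : ℝ in (-S)..S, H ((s:ℂ) + (θ₁:ℂ) * Complex.I))
      - (∫ s : ℝ in (-S)..S, H ((s:ℂ) + (θ₂:ℂ) * Complex.I))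
      + Complex.I • (∫ y : ℝ in θ₁..θ₂, H ((S:ℂ) + (y:ℂ) * Complex.I))
      - Complex.I • (∫ y : ℝ in θ₁..θ₂, H ((-S:ℂ) + (y:ℂ) * Complex.I))) atTop
      (𝓝 (0 : ℂ)) := by
    simp only [hrect]
    exact tendsto_const_nhds
  have heq : (∫ s : ℝ, H ((s:ℂ) + (θ₁:ℂ) * Complex.I))
      = ∫ s : ℝ, H ((s:ℂ) + (θ₂:ℂ) * Complex.I) := by
    have := tendsto_nhds_unique hcomb hconst
    rw [add_zero, sub_zero, sub_eq_zero] at this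
    exact this
  exact ⟨hray θ₁ hmem1, hray θ₂ hmem2, by rw [hsub θ₁, hsub θ₂, heq]⟩
end

section
/- Let ξ₀ ∈ ℂ, let θ₁ ≠ θ₂ be real, and let Φ be holomorphic on an open set containing the two rays {ξ₀ + t e^{iθ_k} : t ≥ 0} (k = 1, 2), with |Φ(ξ₀ + t e^{iθ_k})| ≤ C e^{K t} for all t ≥ 0 and k = 1, 2, where C, K ≥ 0. Let U = {x ∈ ℂ : Re(x e^{iθ₁}) > K and Re(x e^{iθ₂}) > K}. Then for every x ∈ U both ray integrals ∫_0^∞ e^{−x(ξ₀ + t e^{iθ_k})} Φ(ξ₀ + t e^{iθ_k}) e^{iθ_k} dt converge absolutely, the function F(x) := ∫_0^∞ e^{−x(ξ₀ + t e^{iθ₂})} Φ(ξ₀ + t e^{iθ₂}) e^{iθ₂} dt − ∫_0^∞ e^{−x(ξ₀ + t e^{iθ₁})} Φ(ξ₀ + t e^{iθ₁}) e^{iθ₁} dt is holomorphic on U, and |F(x)| ≤ C e^{−Re(x ξ₀)} (1/(Re(x e^{iθ₁}) − K) + 1/(Re(x e^{iθ₂}) − K)) for all x ∈ U. -/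
open MeasureTheory Set

lemma integral_exp_neg_mul_Ioi' {b : ℝ} (hb : 0 < b) :
    ∫ t in Set.Ioi (0:ℝ), Real.exp (-b * t) = 1 / b := by
  have hderiv : ∀ t ∈ Set.Ici (0:ℝ),
      HasDerivAt (fun u : ℝ => -Real.exp (-b * u) / b) (Real.exp (-b * t)) t := by
    intro t _
    have h1 : HasDerivAt (fun u : ℝ => -b * u) (-b) t := by
      simpa using (hasDerivAt_id t).const_mul (-b)
    have h2 := (h1.exp).neg.div_const b
    rw [show -(Real.exp (-b * t) * -b) / b = Real.exp (-b * t) by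
      rw [mul_neg, neg_neg, mul_div_assoc, div_self hb.ne', mul_one]] at h2
    exact h2
  have htend : Filter.Tendsto (fun u : ℝ => -Real.exp (-b * u) / b) Filter.atTop (nhds 0) := by
    have h3 : Filter.Tendsto (fun u : ℝ => -b * u) Filter.atTop Filter.atBot := by
      exact Filter.tendsto_id.const_mul_atTop_of_neg (neg_neg_iff_pos.mpr hb)
    have := (Real.tendsto_exp_atBot.comp h3).neg.div_const b
    simpa using this
  have := integral_Ioi_of_hasDerivAt_of_tendsto' hderiv
    (exp_neg_integrableOn_Ioi 0 hb) htend
  simp only [neg_mul] at this ⊢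
  rw [this]; field_simp
  simp

lemma re_neg_mul_ray (ξ₀ x e : ℂ) (t : ℝ) :
    (-x * (ξ₀ + (t : ℂ) * e)).re = -(x * ξ₀).re - t * (x * e).re := by
  have h : -x * (ξ₀ + (t : ℂ) * e) = -(x * ξ₀) + (t : ℂ) * (-(x * e)) := by ring
  rw [h]
  simp [Complex.add_re, Complex.re_ofReal_mul, Complex.neg_re]
  ring

lemma norm_rayF (ξ₀ x : ℂ) (θ : ℝ) (Φ : ℂ → ℂ) (t : ℝ) :
    ‖Complex.exp (-x * (ξ₀ + (t : ℂ) * Complex.exp ((θ : ℂ) * Complex.I))) *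
        Φ (ξ₀ + (t : ℂ) * Complex.exp ((θ : ℂ) * Complex.I)) *
        Complex.exp ((θ : ℂ) * Complex.I)‖ =
      Real.exp (-(x * ξ₀).re - t * (x * Complex.exp ((θ : ℂ) * Complex.I)).re) *
        ‖Φ (ξ₀ + (t : ℂ) * Complex.exp ((θ : ℂ) * Complex.I))‖ := by
  rw [norm_mul, norm_mul]
  rw [Complex.norm_exp_ofReal_mul_I, Complex.norm_exp, re_neg_mul_ray]
  ring

lemma poly_exp_bound {δ R : ℝ} (hδ : 0 < δ) (hR : 0 ≤ R) {t : ℝ} (ht : 0 ≤ t) :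
    (R + t) * Real.exp (-δ * t) ≤ (R + 2 / δ) * Real.exp (-(δ / 2) * t) := by
  have h1 : Real.exp (-δ * t) = Real.exp (-(δ / 2) * t) * Real.exp (-(δ / 2) * t) := by
    rw [← Real.exp_add]; ring_nf
  have hle1 : Real.exp (-(δ / 2) * t) ≤ 1 := Real.exp_le_one_iff.mpr (by nlinarith)
  have h2 : t * Real.exp (-(δ / 2) * t) ≤ 2 / δ := by
    have hinv : Real.exp (-(δ / 2) * t) = (Real.exp ((δ / 2) * t))⁻¹ := by
      rw [← Real.exp_neg]; ring_nf
    rw [hinv, mul_inv_le_iff₀ (Real.exp_pos _)]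
    have he := Real.add_one_le_exp ((δ / 2) * t)
    rw [div_mul_eq_mul_div, le_div_iff₀ hδ]
    nlinarith
  calc (R + t) * Real.exp (-δ * t)
      = (R * Real.exp (-(δ / 2) * t) + t * Real.exp (-(δ / 2) * t)) *
          Real.exp (-(δ / 2) * t) := by rw [h1]; ring
    _ ≤ (R + 2 / δ) * Real.exp (-(δ / 2) * t) := by
        have : R * Real.exp (-(δ / 2) * t) ≤ R := by nlinarith
        exact mul_le_mul_of_nonneg_right (by linarith) (Real.exp_pos _).le

lemma rayMain (ξ₀ : ℂ) (θ : ℝ) (Φ : ℂ → ℂ) (C K : ℝ) (hC : 0 ≤ C)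
    (hcont : ContinuousOn
      (fun t : ℝ => Φ (ξ₀ + (t : ℂ) * Complex.exp ((θ : ℂ) * Complex.I))) (Set.Ici 0))
    (hbd : ∀ t : ℝ, 0 ≤ t →
      ‖Φ (ξ₀ + (t : ℂ) * Complex.exp ((θ : ℂ) * Complex.I))‖ ≤ C * Real.exp (K * t))
    (x : ℂ) (hx : K < (x * Complex.exp ((θ : ℂ) * Complex.I)).re) :
    IntegrableOn (fun t : ℝ =>
        Complex.exp (-x * (ξ₀ + (t : ℂ) * Complex.exp ((θ : ℂ) * Complex.I))) *
          Φ (ξ₀ + (t : ℂ) * Complex.exp ((θ : ℂ) * Complex.I)) *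
          Complex.exp ((θ : ℂ) * Complex.I)) (Set.Ioi 0) ∧
    ‖∫ t : ℝ in Set.Ioi 0,
        Complex.exp (-x * (ξ₀ + (t : ℂ) * Complex.exp ((θ : ℂ) * Complex.I))) *
          Φ (ξ₀ + (t : ℂ) * Complex.exp ((θ : ℂ) * Complex.I)) *
          Complex.exp ((θ : ℂ) * Complex.I)‖ ≤
      C * Real.exp (-(x * ξ₀).re) * (1 / ((x * Complex.exp ((θ : ℂ) * Complex.I)).re - K)) ∧
    DifferentiableAt ℂ (fun y : ℂ => ∫ t : ℝ in Set.Ioi 0,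
        Complex.exp (-y * (ξ₀ + (t : ℂ) * Complex.exp ((θ : ℂ) * Complex.I))) *
          Φ (ξ₀ + (t : ℂ) * Complex.exp ((θ : ℂ) * Complex.I)) *
          Complex.exp ((θ : ℂ) * Complex.I)) x := by
  set e : ℂ := Complex.exp ((θ : ℂ) * Complex.I) with he
  set ray : ℝ → ℂ := fun t => ξ₀ + (t : ℂ) * e with hray
  set f : ℂ → ℝ → ℂ := fun y t => Complex.exp (-y * ray t) * Φ (ray t) * e with hfdef
  -- measurability
  have hmeas : ∀ y : ℂ, AEStronglyMeasurable (f y) (volume.restrict (Set.Ioi 0)) := by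
    intro y
    apply ContinuousOn.aestronglyMeasurable _ measurableSet_Ioi
    apply ContinuousOn.mul _ continuousOn_const
    apply ContinuousOn.mul _ (hcont.mono Set.Ioi_subset_Ici_self)
    exact (Complex.continuous_exp.comp (by fun_prop)).continuousOn
  -- pointwise bound
  have hpt : ∀ y : ℂ, ∀ t ∈ Set.Ioi (0:ℝ),
      ‖f y t‖ ≤ (C * Real.exp (-(y * ξ₀).re)) * Real.exp (-((y * e).re - K) * t) := by
    intro y t ht
    have ht' : (0:ℝ) ≤ t := le_of_lt ht
    have hn := norm_rayF ξ₀ y θ Φ t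
    rw [hfdef]
    simp only []
    rw [hn]
    calc Real.exp (-(y * ξ₀).re - t * (y * e).re) * ‖Φ (ray t)‖
        ≤ Real.exp (-(y * ξ₀).re - t * (y * e).re) * (C * Real.exp (K * t)) :=
          mul_le_mul_of_nonneg_left (hbd t ht') (Real.exp_pos _).le
      _ = (C * Real.exp (-(y * ξ₀).re)) * Real.exp (-((y * e).re - K) * t) := by
          rw [mul_comm, mul_assoc, ← Real.exp_add, mul_assoc, ← Real.exp_add]
          ring_nf
  -- integrability
  have hint : ∀ y : ℂ, K < (y * e).re → IntegrableOn (f y) (Set.Ioi 0) := by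
    intro y hy
    refine Integrable.mono' ((exp_neg_integrableOn_Ioi 0 (by linarith : (0:ℝ) < (y * e).re - K)).const_mul
      (C * Real.exp (-(y * ξ₀).re))) (hmeas y) ?_
    exact (ae_restrict_iff' measurableSet_Ioi).2 (Filter.Eventually.of_forall (hpt y))
  refine ⟨hint x hx, ?_, ?_⟩
  · -- bound
    have h1 := norm_integral_le_of_norm_le
      (((exp_neg_integrableOn_Ioi 0 (by linarith : (0:ℝ) < (x * e).re - K)).const_mul
        (C * Real.exp (-(x * ξ₀).re))))
      ((ae_restrict_iff' measurableSet_Ioi).2 (Filter.Eventually.of_forall (hpt x)))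
    refine h1.trans (le_of_eq ?_)
    rw [integral_const_mul, integral_exp_neg_mul_Ioi' (by linarith : (0:ℝ) < (x * e).re - K)]
  · -- holomorphy
    set a₀ : ℝ := (x * e).re with ha₀
    set δ : ℝ := (a₀ - K) / 2 with hδdef
    have hδ : 0 < δ := by rw [hδdef]; linarith
    set F' : ℂ → ℝ → ℂ := fun y t =>
      Complex.exp (-y * ray t) * (-1 * ray t) * Φ (ray t) * e with hF'def
    have habs_e : ‖e‖ = 1 := Complex.norm_exp_ofReal_mul_I θ
    have hball : ∀ y ∈ Metric.ball x δ, K + δ < (y * e).re := by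
      intro y hy
      have hd : ‖y - x‖ < δ := by
        rw [Metric.mem_ball, Complex.dist_eq] at hy; exact hy
      have h2 : |(y * e - x * e).re| ≤ ‖y - x‖ := by
        calc |(y * e - x * e).re| ≤ ‖y * e - x * e‖ := Complex.abs_re_le_norm _
          _ = ‖(y - x) * e‖ := by ring_nf
          _ = ‖y - x‖ := by rw [norm_mul, habs_e, mul_one]
      have h3 : |(y * e).re - (x * e).re| ≤ ‖y - x‖ := by
        rwa [Complex.sub_re] at h2
      have := abs_lt.mp (lt_of_le_of_lt h3 hd)
      have hKa : a₀ = K + 2 * δ := by rw [hδdef]; ring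
      rw [ha₀] at hKa
      linarith [this.1]
    set M : ℝ := (‖x‖ + δ) * ‖ξ₀‖ with hM
    have hreM : ∀ y ∈ Metric.ball x δ, -(y * ξ₀).re ≤ M := by
      intro y hy
      have hd : ‖y - x‖ < δ := by
        rw [Metric.mem_ball, Complex.dist_eq] at hy; exact hy
      have : ‖y‖ ≤ ‖x‖ + δ := by
        calc ‖y‖ = ‖x + (y - x)‖ := by ring_nf
          _ ≤ ‖x‖ + ‖y - x‖ := norm_add_le _ _
          _ ≤ ‖x‖ + δ := by linarith
      calc -(y * ξ₀).re ≤ |(y * ξ₀).re| := neg_le_abs _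
        _ ≤ ‖y * ξ₀‖ := Complex.abs_re_le_norm _
        _ = ‖y‖ * ‖ξ₀‖ := norm_mul _ _
        _ ≤ M := by
            rw [hM]
            exact mul_le_mul_of_nonneg_right this (norm_nonneg _)
    set bound : ℝ → ℝ := fun t =>
      (C * Real.exp M) * ((‖ξ₀‖ + 2 / δ) * Real.exp (-(δ / 2) * t)) with hbdef
    have hbound_int : Integrable bound (volume.restrict (Set.Ioi 0)) := by
      exact (((exp_neg_integrableOn_Ioi 0 (by linarith : (0:ℝ) < δ / 2)).const_mul
        (‖ξ₀‖ + 2 / δ)).const_mul (C * Real.exp M))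
    have hF'bd : ∀ t ∈ Set.Ioi (0:ℝ), ∀ y ∈ Metric.ball x δ, ‖F' y t‖ ≤ bound t := by
      intro t ht y hy
      have ht' : (0:ℝ) ≤ t := le_of_lt ht
      have hye := hball y hy
      have hyM := hreM y hy
      have hnorm : ‖F' y t‖ =
          Real.exp (-(y * ξ₀).re - t * (y * e).re) * ‖ray t‖ *
            ‖Φ (ray t)‖ := by
        rw [hF'def]
        simp only []
        rw [norm_mul, norm_mul, norm_mul]
        rw [habs_e, Complex.norm_exp, re_neg_mul_ray]
        rw [neg_one_mul, norm_neg]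
        ring
      rw [hnorm]
      have hb1 : ‖ray t‖ ≤ ‖ξ₀‖ + t := by
        calc ‖ray t‖ ≤ ‖ξ₀‖ + ‖(t : ℂ) * e‖ :=
              norm_add_le _ _
          _ = ‖ξ₀‖ + t := by
              rw [norm_mul, habs_e, mul_one, Complex.norm_real, Real.norm_eq_abs, abs_of_nonneg ht']
      have hexp : Real.exp (-(y * ξ₀).re - t * (y * e).re) ≤
          Real.exp M * Real.exp (-(K + δ) * t) := by
        rw [← Real.exp_add]
        apply Real.exp_le_exp.2
        nlinarith [hye, hyM, ht']
      have hΦt := hbd t ht'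
      calc Real.exp (-(y * ξ₀).re - t * (y * e).re) * ‖ray t‖ *
            ‖Φ (ray t)‖
          ≤ (Real.exp M * Real.exp (-(K + δ) * t)) * (‖ξ₀‖ + t) *
              (C * Real.exp (K * t)) := by
            apply mul_le_mul ?_ hΦt (norm_nonneg _)
              (by positivity)
            exact mul_le_mul hexp hb1 (norm_nonneg _) (by positivity)
        _ = (C * Real.exp M) * ((‖ξ₀‖ + t) * Real.exp (-δ * t)) := by
            rw [← Real.exp_add]
            have h9 : Real.exp (M + -(K + δ) * t) * Real.exp (K * t) =
                Real.exp M * Real.exp (-δ * t) := by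
              rw [← Real.exp_add, ← Real.exp_add]; congr 1; ring
            linear_combination ((‖ξ₀‖ + t) * C) * h9
        _ ≤ bound t := by
            rw [hbdef]
            exact mul_le_mul_of_nonneg_left
              (poly_exp_bound hδ (norm_nonneg _) ht') (by positivity)
    have hF'meas : AEStronglyMeasurable (F' x) (volume.restrict (Set.Ioi 0)) := by
      apply ContinuousOn.aestronglyMeasurable _ measurableSet_Ioi
      apply ContinuousOn.mul _ continuousOn_const
      apply ContinuousOn.mul _ (hcont.mono Set.Ioi_subset_Ici_self)
      apply ContinuousOn.mul _ (by fun_prop)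
      exact (Complex.continuous_exp.comp (by fun_prop)).continuousOn
    have h_diff : ∀ᵐ t ∂(volume.restrict (Set.Ioi (0:ℝ))), ∀ y ∈ Metric.ball x δ,
        HasDerivAt (fun y => f y t) (F' y t) y := by
      refine Filter.Eventually.of_forall fun t => fun y _ => ?_
      have h1 : HasDerivAt (fun y : ℂ => -y * ray t) (-1 * ray t) y :=
        ((hasDerivAt_id y).neg).mul_const (ray t)
      have h2 := (h1.cexp.mul_const (Φ (ray t))).mul_const e
      exact h2
    have := hasDerivAt_integral_of_dominated_loc_of_deriv_le (Metric.ball_mem_nhds x hδ)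
      (Filter.Eventually.of_forall hmeas) (hint x hx) hF'meas
      ((ae_restrict_iff' measurableSet_Ioi).2 (Filter.Eventually.of_forall hF'bd))
      hbound_int h_diff
    exact this.2.differentiableAt

/-- The strict Laplace transform of a major of exponential type along the
two-ray contour: absolute convergence, holomorphy, and exponential-type bound
in the dual directions. -/
theorem stmt_10 (ξ₀ : ℂ) (θ₁ θ₂ : ℝ) (hθ : θ₁ ≠ θ₂)
    (Ω : Set ℂ) (hΩ : IsOpen Ω)
    (hray1 : ∀ t : ℝ, 0 ≤ t → ξ₀ + (t : ℂ) * Complex.exp ((θ₁ : ℂ) * Complex.I) ∈ Ω)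
    (hray2 : ∀ t : ℝ, 0 ≤ t → ξ₀ + (t : ℂ) * Complex.exp ((θ₂ : ℂ) * Complex.I) ∈ Ω)
    (Φ : ℂ → ℂ) (hΦ : DifferentiableOn ℂ Φ Ω)
    (C K : ℝ) (hC : 0 ≤ C) (hK : 0 ≤ K)
    (hbd1 : ∀ t : ℝ, 0 ≤ t →
      ‖Φ (ξ₀ + (t : ℂ) * Complex.exp ((θ₁ : ℂ) * Complex.I))‖ ≤ C * Real.exp (K * t))
    (hbd2 : ∀ t : ℝ, 0 ≤ t →
      ‖Φ (ξ₀ + (t : ℂ) * Complex.exp ((θ₂ : ℂ) * Complex.I))‖ ≤ C * Real.exp (K * t))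
    (U : Set ℂ) (hU : U = {x : ℂ | K < (x * Complex.exp ((θ₁ : ℂ) * Complex.I)).re ∧
      K < (x * Complex.exp ((θ₂ : ℂ) * Complex.I)).re})
    (F : ℂ → ℂ) (hF : ∀ x : ℂ, F x =
      (∫ t : ℝ in Set.Ioi 0,
        Complex.exp (-x * (ξ₀ + (t : ℂ) * Complex.exp ((θ₂ : ℂ) * Complex.I))) *
          Φ (ξ₀ + (t : ℂ) * Complex.exp ((θ₂ : ℂ) * Complex.I)) *
          Complex.exp ((θ₂ : ℂ) * Complex.I)) -
      ∫ t : ℝ in Set.Ioi 0,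
        Complex.exp (-x * (ξ₀ + (t : ℂ) * Complex.exp ((θ₁ : ℂ) * Complex.I))) *
          Φ (ξ₀ + (t : ℂ) * Complex.exp ((θ₁ : ℂ) * Complex.I)) *
          Complex.exp ((θ₁ : ℂ) * Complex.I)) :
    (∀ x ∈ U,
      IntegrableOn (fun t : ℝ =>
        Complex.exp (-x * (ξ₀ + (t : ℂ) * Complex.exp ((θ₁ : ℂ) * Complex.I))) *
          Φ (ξ₀ + (t : ℂ) * Complex.exp ((θ₁ : ℂ) * Complex.I)) *
          Complex.exp ((θ₁ : ℂ) * Complex.I)) (Set.Ioi 0) ∧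
      IntegrableOn (fun t : ℝ =>
        Complex.exp (-x * (ξ₀ + (t : ℂ) * Complex.exp ((θ₂ : ℂ) * Complex.I))) *
          Φ (ξ₀ + (t : ℂ) * Complex.exp ((θ₂ : ℂ) * Complex.I)) *
          Complex.exp ((θ₂ : ℂ) * Complex.I)) (Set.Ioi 0)) ∧
    DifferentiableOn ℂ F U ∧
    ∀ x ∈ U, ‖F x‖ ≤ C * Real.exp (-(x * ξ₀).re) *
      (1 / ((x * Complex.exp ((θ₁ : ℂ) * Complex.I)).re - K) +
       1 / ((x * Complex.exp ((θ₂ : ℂ) * Complex.I)).re - K)) := by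
  subst hU
  have hcont1 : ContinuousOn
      (fun t : ℝ => Φ (ξ₀ + (t : ℂ) * Complex.exp ((θ₁ : ℂ) * Complex.I))) (Set.Ici 0) := by
    apply hΦ.continuousOn.comp (by fun_prop)
    intro t ht
    exact hray1 t ht
  have hcont2 : ContinuousOn
      (fun t : ℝ => Φ (ξ₀ + (t : ℂ) * Complex.exp ((θ₂ : ℂ) * Complex.I))) (Set.Ici 0) := by
    apply hΦ.continuousOn.comp (by fun_prop)
    intro t ht
    exact hray2 t ht
  have hr1 := rayMain ξ₀ θ₁ Φ C K hC hcont1 hbd1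
  have hr2 := rayMain ξ₀ θ₂ Φ C K hC hcont2 hbd2
  refine ⟨fun x hx => ⟨(hr1 x hx.1).1, (hr2 x hx.2).1⟩, ?_, ?_⟩
  · have hFeq : F = fun x : ℂ =>
        (∫ t : ℝ in Set.Ioi 0,
          Complex.exp (-x * (ξ₀ + (t : ℂ) * Complex.exp ((θ₂ : ℂ) * Complex.I))) *
            Φ (ξ₀ + (t : ℂ) * Complex.exp ((θ₂ : ℂ) * Complex.I)) *
            Complex.exp ((θ₂ : ℂ) * Complex.I)) -
        ∫ t : ℝ in Set.Ioi 0,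
          Complex.exp (-x * (ξ₀ + (t : ℂ) * Complex.exp ((θ₁ : ℂ) * Complex.I))) *
            Φ (ξ₀ + (t : ℂ) * Complex.exp ((θ₁ : ℂ) * Complex.I)) *
            Complex.exp ((θ₁ : ℂ) * Complex.I) := funext hF
    rw [hFeq]
    intro x hx
    exact (((hr2 x hx.2).2.2).sub ((hr1 x hx.1).2.2)).differentiableWithinAt
  · intro x hx
    rw [hF x]
    refine (norm_sub_le _ _).trans ?_
    have h1 := (hr1 x hx.1).2.1
    have h2 := (hr2 x hx.2).2.1
    have := add_le_add h2 h1
    refine this.trans (le_of_eq ?_)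
    ring
end

section
/- Let η₁ ∈ ℂ ∖ {0} and let g be holomorphic on an open set containing the half-open segment {t η₁ : 0 < t ≤ 1}, such that the primitive G(t) := lim_{ε→0⁺} ∫_ε^t g(s η₁) η₁ ds exists for every t ∈ (0, 1] and G(t) → 0 as t → 0⁺. Let Φ(ζ) = (1/(2πi)) lim_{ε→0⁺} ∫_ε^1 g(t η₁) η₁ / (t η₁ − ζ) dt for ζ off the closed segment {t η₁ : 0 ≤ t ≤ 1}. Then for every δ ∈ (0, π) and every ε > 0 there is ρ > 0 such that every ζ with 0 < |ζ| < ρ and δ ≤ |Arg(ζ/η₁)| (Arg taken in (−π, π]) satisfies |ζ · Φ(ζ)| ≤ ε. In other words, ζ Φ(ζ) → 0 as ζ → 0 uniformly in every angular sector not adherent to the segment. -/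
open MeasureTheory Topology Filter

lemma aux_sector (δ : ℝ) (hδ1 : 0 ≤ δ) (η₁ ζ : ℂ) (hη₁ : η₁ ≠ 0)
    (hζ : ζ ≠ 0) (hsec : δ ≤ |Complex.arg (ζ / η₁)|) (t : ℝ) (ht : 0 ≤ t) :
    (1 - |Real.cos δ|) * (t^2 * (‖η₁‖)^2 + (‖ζ‖)^2)
      ≤ (‖(t:ℂ) * η₁ - ζ‖)^2 := by
  set w := ζ / η₁ with hw
  have hw0 : w ≠ 0 := div_ne_zero hζ hη₁
  have hfact : (t:ℂ) * η₁ - ζ = ((t:ℂ) - w) * η₁ := by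
    rw [hw, sub_mul, div_mul_cancel₀ _ hη₁]
  have habs : ‖(t:ℂ) * η₁ - ζ‖ = ‖(t:ℂ) - w‖ * ‖η₁‖ := by
    rw [hfact, norm_mul]
  have hwζ : ‖w‖ * ‖η₁‖ = ‖ζ‖ := by
    rw [hw, norm_div]
    rw [div_mul_cancel₀]
    simpa using hη₁
  have hsq : (‖(t:ℂ) - w‖)^2 = t^2 - 2*t*w.re + (‖w‖)^2 := by
    rw [← Complex.normSq_eq_norm_sq, ← Complex.normSq_eq_norm_sq]
    simp [Complex.normSq_apply, Complex.sub_re, Complex.sub_im]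
    ring
  have hargπ : |Complex.arg w| ≤ Real.pi := Complex.abs_arg_le_pi w
  have hcos : Real.cos (Complex.arg w) ≤ Real.cos δ := by
    have h1 : Real.cos (Complex.arg w) = Real.cos (|Complex.arg w|) := by
      rcases abs_choice (Complex.arg w) with h | h
      · rw [h]
      · rw [h, Real.cos_neg]
    rw [h1]
    exact Real.cos_le_cos_of_nonneg_of_le_pi hδ1 hargπ hsec
  have hre : w.re ≤ ‖w‖ * Real.cos δ := by
    have h0 := Complex.cos_arg hw0
    have habsw : 0 < ‖w‖ := norm_pos_iff.mpr hw0
    have h2 : w.re = ‖w‖ * Real.cos (Complex.arg w) := by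
      rw [h0]; field_simp
    rw [h2]
    exact mul_le_mul_of_nonneg_left hcos habsw.le
  have key : (1 - |Real.cos δ|) * (t^2 + (‖w‖)^2) ≤ (‖(t:ℂ) - w‖)^2 := by
    rw [hsq]
    have hcabs : Real.cos δ ≤ |Real.cos δ| := le_abs_self _
    have h2 : 2*t*w.re ≤ 2*t*(‖w‖) * |Real.cos δ| := by
      nlinarith [mul_le_mul_of_nonneg_left hre (by positivity : (0:ℝ) ≤ 2*t),
        mul_le_mul_of_nonneg_left hcabs (by positivity : (0:ℝ) ≤ 2*t*(‖w‖))]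
    nlinarith [sq_nonneg (t - ‖w‖), abs_nonneg (Real.cos δ), norm_nonneg w]
  calc (1 - |Real.cos δ|) * (t^2 * (‖η₁‖)^2 + (‖ζ‖)^2)
      = ((1 - |Real.cos δ|) * (t^2 + (‖w‖)^2)) * (‖η₁‖)^2 := by
        rw [← hwζ]; ring
    _ ≤ (‖(t:ℂ) - w‖)^2 * (‖η₁‖)^2 := by
        apply mul_le_mul_of_nonneg_right key (by positivity)
    _ = (‖(t:ℂ) * η₁ - ζ‖)^2 := by rw [habs]; ring

lemma aux_arctan (A r : ℝ) (hA : 0 < A) (hr : 0 < r) (e t0 : ℝ) (he : 0 ≤ e) :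
    ∫ t in e..t0, (t^2*A^2 + r^2)⁻¹ ≤ Real.pi/(2*A*r) := by
  have hden : ∀ t : ℝ, t^2*A^2 + r^2 ≠ 0 := fun t => by positivity
  have hF : ∀ t : ℝ, HasDerivAt (fun x => (A*r)⁻¹ * Real.arctan (A/r*x)) ((t^2*A^2 + r^2)⁻¹) t := by
    intro t
    have h1 : HasDerivAt (fun x : ℝ => A/r*x) (A/r) t := by
      simpa using (hasDerivAt_id t).const_mul (A/r)
    have h2 := (Real.hasDerivAt_arctan (A/r*t)).comp t h1
    have h3 := h2.const_mul (A*r)⁻¹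
    refine h3.congr_deriv ?_
    field_simp
    ring
  have hcont : Continuous fun t : ℝ => (t^2*A^2 + r^2)⁻¹ := by
    apply Continuous.inv₀ (by continuity) hden
  rw [intervalIntegral.integral_eq_sub_of_hasDerivAt (fun x _ => hF x) (hcont.intervalIntegrable _ _)]
  have h4 : Real.arctan (A/r*t0) ≤ Real.pi/2 := (Real.arctan_lt_pi_div_two _).le
  have h5 : 0 ≤ Real.arctan (A/r*e) := by
    rw [← Real.arctan_zero]; exact Real.arctan_strictMono.monotone (by positivity)
  have h6 : (0:ℝ) < A*r := by positivity
  rw [div_eq_mul_inv (Real.pi) (2*A*r)]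
  calc (A*r)⁻¹ * Real.arctan (A/r*t0) - (A*r)⁻¹ * Real.arctan (A/r*e)
      ≤ (A*r)⁻¹ * (Real.pi/2) - 0 := by
        have := mul_le_mul_of_nonneg_left h4 (inv_nonneg.mpr h6.le)
        have := mul_le_mul_of_nonneg_left h5 (inv_nonneg.mpr h6.le)
        linarith [mul_nonneg (inv_nonneg.mpr h6.le) h5]
    _ = Real.pi * (2*A*r)⁻¹ := by
        rw [sub_zero, mul_comm ((A*r)⁻¹)]
        rw [div_eq_mul_inv]
        rw [mul_assoc, ← mul_inv]
        ring_nf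

set_option maxHeartbeats 2000000 in
/-- Smallness of the adapted major (Proposition 6.3, Part II / Lemma 6.1):
ζ·Φ(ζ) → 0 as ζ → 0 uniformly in every angular sector not adherent to the
segment of integration. -/
theorem stmt_12 (η₁ : ℂ) (hη₁ : η₁ ≠ 0)
    (V : Set ℂ) (hV : IsOpen V)
    (hseg : ∀ t : ℝ, 0 < t → t ≤ 1 → (t : ℂ) * η₁ ∈ V)
    (g : ℂ → ℂ) (hg : DifferentiableOn ℂ g V)
    (G : ℝ → ℂ) (hG0 : G 0 = 0)
    (hG : ∀ t : ℝ, 0 < t → t ≤ 1 →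
      Tendsto (fun ε : ℝ => ∫ s in ε..t, g ((s : ℂ) * η₁) * η₁) (𝓝[>] 0) (𝓝 (G t)))
    (hGlim : Tendsto G (𝓝[>] 0) (𝓝 0))
    (Φ : ℂ → ℂ)
    (hΦ : ∀ ζ : ℂ, (∀ t : ℝ, 0 ≤ t → t ≤ 1 → ζ ≠ (t : ℂ) * η₁) →
      Tendsto (fun ε : ℝ =>
          (1 / (2 * (Real.pi : ℂ) * Complex.I)) *
            ∫ t in ε..1, g ((t : ℂ) * η₁) * η₁ / ((t : ℂ) * η₁ - ζ))
        (𝓝[>] 0) (𝓝 (Φ ζ))) :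
    ∀ δ : ℝ, 0 < δ → δ < Real.pi → ∀ ε > (0:ℝ), ∃ ρ > (0:ℝ), ∀ ζ : ℂ,
      ζ ≠ 0 → ‖ζ‖ < ρ → δ ≤ |Complex.arg (ζ / η₁)| →
        ‖ζ * Φ ζ‖ ≤ ε := by
  -- the integrand along the segment
  set f : ℝ → ℂ := fun t => g ((t : ℂ) * η₁) * η₁ with hfdef
  -- extend the domain slightly beyond 1
  have hcoe : Continuous fun t : ℝ => (t : ℂ) * η₁ := Complex.continuous_ofReal.mul continuous_const
  have hSopen : IsOpen {t : ℝ | (t : ℂ) * η₁ ∈ V} := hV.preimage hcoe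
  obtain ⟨h, hh0, hball⟩ := Metric.isOpen_iff.mp hSopen 1 (by simpa using hseg 1 one_pos le_rfl)
  set b : ℝ := 1 + min h 1 / 2 with hbdef
  have hb1 : 1 < b := by
    have : 0 < min h 1 := lt_min hh0 one_pos
    simp only [hbdef]; linarith
  have hb2 : b < 2 := by
    have : min h 1 ≤ 1 := min_le_right _ _
    simp only [hbdef]; linarith
  have hSb : ∀ t : ℝ, 0 < t → t ≤ b → (t : ℂ) * η₁ ∈ V := by
    intro t ht htb
    rcases le_or_gt t 1 with h1 | h1
    · exact hseg t ht h1
    · apply hball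
      simp only [Metric.mem_ball, Real.dist_eq]
      have h2 : min h 1 ≤ h := min_le_left _ _
      have h3 : 0 < min h 1 := lt_min hh0 one_pos
      rw [abs_of_pos (by linarith)]
      simp only [hbdef] at htb
      linarith
  set U : Set ℝ := {t : ℝ | (t : ℂ) * η₁ ∈ V} ∩ Set.Ioo 0 2 with hUdef
  have hUopen : IsOpen U := hSopen.inter isOpen_Ioo
  have hIU : Set.Ioc 0 b ⊆ U := by
    intro t ht
    exact ⟨hSb t ht.1 ht.2, ht.1, lt_of_le_of_lt ht.2 hb2⟩
  have hfU : ContinuousOn f U := by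
    apply ContinuousOn.mul _ continuousOn_const
    exact hg.continuousOn.comp hcoe.continuousOn (fun x hx => hx.1)
  have hfcA : ∀ t ∈ Set.Ioc (0:ℝ) b, ContinuousAt f t := fun t ht =>
    hfU.continuousAt (hUopen.mem_nhds (hIU ht))
  have hmeasAt : ∀ t ∈ Set.Ioc (0:ℝ) b, StronglyMeasurableAtFilter f (𝓝 t) := fun t ht =>
    hfU.stronglyMeasurableAtFilter hUopen t (hIU ht)
  have hIoc : ∀ x ∈ Set.Ioc (0:ℝ) b, ∀ y ∈ Set.Ioc (0:ℝ) b, Set.uIcc x y ⊆ Set.Ioc (0:ℝ) b := by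
    intro x hx y hy t ht
    rw [Set.uIcc_eq_union] at ht
    rcases ht with ht | ht
    · exact ⟨lt_of_lt_of_le hx.1 ht.1, le_trans ht.2 hy.2⟩
    · exact ⟨lt_of_lt_of_le hy.1 ht.1, le_trans ht.2 hx.2⟩
  have hInt : ∀ x ∈ Set.Ioc (0:ℝ) b, ∀ y ∈ Set.Ioc (0:ℝ) b, IntervalIntegrable f volume x y := by
    intro x hx y hy
    apply ContinuousOn.intervalIntegrable
    exact hfU.mono (le_trans (hIoc x hx y hy) hIU)
  have hprim : ∀ a ∈ Set.Ioc (0:ℝ) b, ∀ t ∈ Set.Ioc (0:ℝ) b,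
      HasDerivAt (fun x => ∫ s in a..x, f s) (f t) t := fun a ha t ht =>
    intervalIntegral.integral_hasDerivAt_right (hInt a ha t ht) (hmeasAt t ht) (hfcA t ht)
  have hsub1 : Set.Ioc (0:ℝ) 1 ⊆ Set.Ioc (0:ℝ) b := Set.Ioc_subset_Ioc_right hb1.le
  have hGeq : ∀ a ∈ Set.Ioc (0:ℝ) 1, ∀ t ∈ Set.Ioc (0:ℝ) 1, G t = G a + ∫ s in a..t, f s := by
    intro a ha t ht
    have hta := hG t ht.1 ht.2
    have htb := hG a ha.1 ha.2
    have heq : ∀ᶠ e in 𝓝[>](0:ℝ),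
        (∫ s in e..t, f s) = (∫ s in e..a, f s) + ∫ s in a..t, f s := by
      filter_upwards [Ioo_mem_nhdsGT_of_mem
        (⟨le_rfl, lt_min ha.1 ht.1⟩ : (0:ℝ) ∈ Set.Ico 0 (min a t))] with e he
      have he' : e ∈ Set.Ioc (0:ℝ) b :=
        ⟨he.1, le_trans (le_trans he.2.le (min_le_left _ _)) (le_trans ha.2 hb1.le)⟩
      exact (intervalIntegral.integral_add_adjacent_intervals
        (hInt e he' a (hsub1 ha)) (hInt a (hsub1 ha) t (hsub1 ht))).symm
    have h2 : Tendsto (fun e => (∫ s in e..a, f s) + ∫ s in a..t, f s) (𝓝[>](0:ℝ))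
        (𝓝 (G a + ∫ s in a..t, f s)) := htb.add_const _
    exact tendsto_nhds_unique hta (h2.congr' (heq.mono fun e he => he.symm))
  have hGderiv : ∀ x ∈ Set.Ioo (0:ℝ) 1, HasDerivAt G (f x) x := by
    intro x hx
    have hx' : x ∈ Set.Ioc (0:ℝ) b := ⟨hx.1, le_trans hx.2.le hb1.le⟩
    have h1 : HasDerivAt (fun t => G x + ∫ s in x..t, f s) (f x) x :=
      (hprim x hx' x hx').const_add (G x)
    apply h1.congr_of_eventuallyEq
    filter_upwards [isOpen_Ioo.mem_nhds hx] with t ht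
    exact hGeq x ⟨hx.1, hx.2.le⟩ t ⟨ht.1, ht.2.le⟩
  have hGcont : ∀ x, 0 < x → x ≤ 1 → ContinuousOn G (Set.Icc x 1) := by
    intro x hx hx1
    have hsub : Set.Icc x 1 ⊆ Set.Ioc (0:ℝ) b := fun t ht =>
      ⟨lt_of_lt_of_le hx ht.1, le_trans ht.2 hb1.le⟩
    apply ContinuousOn.congr (f := fun t => G x + ∫ s in x..t, f s)
    · intro t ht
      exact ((hprim x ⟨hx, le_trans hx1 hb1.le⟩ t (hsub ht)).const_add (G x)).continuousAt.continuousWithinAt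
    · intro t ht
      exact hGeq x ⟨hx, hx1⟩ t ⟨lt_of_lt_of_le hx ht.1, ht.2⟩
  -- main quantified statement
  intro δ hδ0 hδπ ε hε
  have hπ := Real.pi_pos
  set c2 : ℝ := 1 - |Real.cos δ| with hc2def
  have hc2 : 0 < c2 := by
    have h1 : Real.cos δ < 1 := by
      have := Real.cos_lt_cos_of_nonneg_of_le_pi le_rfl hδπ.le hδ0
      simpa using this
    have h2 : -1 < Real.cos δ := by
      have := Real.cos_lt_cos_of_nonneg_of_le_pi hδ0.le le_rfl hδπ
      simpa [Real.cos_pi] using this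
    have : |Real.cos δ| < 1 := abs_lt.mpr ⟨h2, h1⟩
    simp only [hc2def]; linarith
  set c : ℝ := Real.sqrt c2 with hcdef
  have hc : 0 < c := Real.sqrt_pos.mpr hc2
  have hcsq : c^2 = c2 := Real.sq_sqrt hc2.le
  set ε₁ : ℝ := ε * c2 / (2 * Real.pi) with hε₁def
  have hε₁ : 0 < ε₁ := by positivity
  -- choose t₀
  obtain ⟨t₀, ht₀0, ht₀1, hGt₀⟩ : ∃ t₀, 0 < t₀ ∧ t₀ ≤ 1 ∧ ∀ t, 0 < t → t ≤ t₀ → ‖G t‖ ≤ ε₁ := by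
    have h : G ⁻¹' Metric.closedBall 0 ε₁ ∈ 𝓝[>] (0:ℝ) :=
      hGlim (Metric.closedBall_mem_nhds (0:ℂ) hε₁)
    rw [mem_nhdsGT_iff_exists_Ioc_subset] at h
    obtain ⟨u, hu, hsub⟩ := h
    refine ⟨min u 1, lt_min hu one_pos, min_le_right _ _, fun t ht htu => ?_⟩
    have := hsub ⟨ht, le_trans htu (min_le_left _ _)⟩
    simpa [Metric.mem_closedBall, dist_zero_right] using this
  -- bound for G on [t₀, 1]
  obtain ⟨M, hM⟩ := isCompact_Icc.exists_bound_of_continuousOn (hGcont t₀ ht₀0 ht₀1)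
  set Mx : ℝ := max M 0 with hMxdef
  have hMx : 0 ≤ Mx := le_max_right _ _
  have hMx' : ∀ t ∈ Set.Icc t₀ 1, ‖G t‖ ≤ Mx := fun t ht => le_trans (hM t ht) (le_max_left _ _)
  set a1 : ℝ := ‖η₁‖ with ha1def
  have ha1 : 0 < a1 := norm_pos_iff.mpr hη₁
  set ρ : ℝ := min (c * a1 * ε / (4 * (‖G 1‖ + 1))) (c2 * t₀^2 * a1 * ε / (4 * (Mx + 1)))
    with hρdef
  have hρ : 0 < ρ := by
    apply lt_min
    · positivity
    · positivity
  refine ⟨ρ, hρ, ?_⟩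
  intro ζ hζ0 hζρ hζsec
  set r : ℝ := ‖ζ‖ with hrdef
  have hr : 0 < r := norm_pos_iff.mpr hζ0
  have hsec2 : ∀ t : ℝ, 0 ≤ t →
      c2 * (t^2 * a1^2 + r^2) ≤ (‖(t:ℂ) * η₁ - ζ‖)^2 :=
    fun t ht => aux_sector δ hδ0.le η₁ ζ hη₁ hζ0 hζsec t ht
  have hne : ∀ t : ℝ, 0 ≤ t → (t:ℂ) * η₁ - ζ ≠ 0 := by
    intro t ht h
    have h1 := hsec2 t ht
    rw [h] at h1
    simp only [norm_zero] at h1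
    nlinarith [mul_pos hc2 (show (0:ℝ) < t^2*a1^2 + r^2 by positivity)]
  have hoff : ∀ t : ℝ, 0 ≤ t → t ≤ 1 → ζ ≠ (t:ℂ) * η₁ := by
    intro t ht _ h
    exact hne t ht (by rw [← h]; ring)
  have hlow : ∀ t : ℝ, 0 ≤ t → c * r ≤ ‖(t:ℂ) * η₁ - ζ‖ := by
    intro t ht
    have h1 : (c * r)^2 ≤ (‖(t:ℂ) * η₁ - ζ‖)^2 := by
      rw [mul_pow, hcsq]
      nlinarith [hsec2 t ht, sq_nonneg (t * a1)]
    have := Real.sqrt_le_sqrt h1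
    rwa [Real.sqrt_sq (by positivity), Real.sqrt_sq (norm_nonneg _)] at this
  have hlow1 : c * a1 ≤ ‖((1:ℝ):ℂ) * η₁ - ζ‖ := by
    have h1 : (c * a1)^2 ≤ (‖((1:ℝ):ℂ) * η₁ - ζ‖)^2 := by
      rw [mul_pow, hcsq]
      nlinarith [hsec2 1 zero_le_one]
    have := Real.sqrt_le_sqrt h1
    rwa [Real.sqrt_sq (by positivity), Real.sqrt_sq (norm_nonneg _)] at this
  have hlowt : ∀ t : ℝ, t₀ ≤ t → c * (t₀ * a1) ≤ ‖(t:ℂ) * η₁ - ζ‖ := by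
    intro t htt
    have ht : 0 ≤ t := le_trans ht₀0.le htt
    have h1 : (c * (t₀ * a1))^2 ≤ (‖(t:ℂ) * η₁ - ζ‖)^2 := by
      rw [mul_pow, hcsq, mul_pow]
      have h2 : t₀^2 ≤ t^2 := pow_le_pow_left₀ ht₀0.le htt 2
      have h3 : c2 * (t₀^2 * a1^2) ≤ c2 * (t^2 * a1^2) := by
        apply mul_le_mul_of_nonneg_left _ hc2.le
        exact mul_le_mul_of_nonneg_right h2 (sq_nonneg a1)
      nlinarith [hsec2 t ht, mul_nonneg hc2.le (sq_nonneg r)]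
    have := Real.sqrt_le_sqrt h1
    rwa [Real.sqrt_sq (by positivity), Real.sqrt_sq (norm_nonneg _)] at this
  -- eventual smallness of G near 0
  have hGsm : ∀ᶠ e in 𝓝[>] (0:ℝ), ‖G e‖ ≤ c * ε / 4 := by
    have h : G ⁻¹' Metric.closedBall 0 (c*ε/4) ∈ 𝓝[>] (0:ℝ) :=
      hGlim (Metric.closedBall_mem_nhds (0:ℂ) (by positivity))
    filter_upwards [h] with e he
    simpa [Metric.mem_closedBall, dist_zero_right] using he
  -- the Cauchy kernel and its derivative
  set u : ℝ → ℂ := fun t => ((t:ℂ) * η₁ - ζ)⁻¹ with hudef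
  set u' : ℝ → ℂ := fun t => -η₁ / ((t:ℂ) * η₁ - ζ)^2 with hu'def
  have hbase : Continuous fun t : ℝ => (t:ℂ) * η₁ - ζ := hcoe.sub continuous_const
  have hud : ∀ t : ℝ, 0 ≤ t → HasDerivAt u (u' t) t := by
    intro t ht
    have h1 : HasDerivAt (fun x : ℝ => (x:ℂ) * η₁ - ζ) η₁ t := by
      simpa using ((Complex.ofRealCLM.hasDerivAt (x := t)).mul_const η₁).sub_const ζ
    have h2 := (hasDerivAt_const t (1:ℂ)).div h1 (hne t ht)
    have h3 : HasDerivAt (fun x : ℝ => ((x:ℂ)*η₁ - ζ)⁻¹) (-η₁ / ((t:ℂ)*η₁ - ζ)^2) t := by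
      simpa [one_div, Pi.div_def] using h2
    exact h3
  have hu'cont : ContinuousOn u' (Set.Ici (0:ℝ)) := by
    apply ContinuousOn.div continuousOn_const (hbase.continuousOn.pow 2)
    intro x hx
    exact pow_ne_zero 2 (hne x hx)
  have hucont : ContinuousOn u (Set.Ici (0:ℝ)) := fun x hx =>
    (hud x hx).continuousAt.continuousWithinAt
  have habsc : ‖1/(2*(Real.pi:ℂ)*Complex.I)‖ = 1/(2*Real.pi) := by
    rw [norm_div, norm_one, norm_mul, norm_mul, Complex.norm_two, Complex.norm_real,
      Complex.norm_I, Real.norm_eq_abs, abs_of_pos hπ, mul_one]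
  -- eventual bound on the truncated integrals
  have hbound : ∀ᶠ e in 𝓝[>] (0:ℝ),
      ‖ζ * ((1 / (2 * (Real.pi:ℂ) * Complex.I)) *
        ∫ t in e..1, f t / ((t:ℂ) * η₁ - ζ))‖ ≤ ε := by
    filter_upwards [Ioo_mem_nhdsGT_of_mem (⟨le_rfl, ht₀0⟩ : (0:ℝ) ∈ Set.Ico 0 t₀), hGsm]
      with e he hGe
    have he0 : 0 < e := he.1
    have het₀ : e < t₀ := he.2
    have he1 : e ≤ 1 := le_trans het₀.le ht₀1
    have heb : e ∈ Set.Ioc (0:ℝ) b := ⟨he0, le_trans he1 hb1.le⟩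
    have h1b : (1:ℝ) ∈ Set.Ioc (0:ℝ) b := ⟨one_pos, hb1.le⟩
    have hIccsub : Set.Icc e 1 ⊆ Set.Ici (0:ℝ) := fun x hx => le_trans he0.le hx.1
    -- integration by parts
    have hparts : ∫ x in e..1, u x * f x
        = u 1 * G 1 - u e * G e - ∫ x in e..1, u' x * G x := by
      apply intervalIntegral.integral_mul_deriv_eq_deriv_mul_of_hasDeriv_right
      · rw [Set.uIcc_of_le he1]; exact hucont.mono hIccsub
      · rw [Set.uIcc_of_le he1]; exact hGcont e he0 he1
      · rw [min_eq_left he1, max_eq_right he1]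
        intro x hx
        exact (hud x (le_trans he0.le hx.1.le)).hasDerivWithinAt
      · rw [min_eq_left he1, max_eq_right he1]
        intro x hx
        exact (hGderiv x ⟨lt_trans he0 hx.1, hx.2⟩).hasDerivWithinAt
      · apply ContinuousOn.intervalIntegrable
        rw [Set.uIcc_of_le he1]; exact hu'cont.mono hIccsub
      · exact hInt e heb 1 h1b
    -- split the remainder integral at t₀
    have hu'Gcont : ContinuousOn (fun x => u' x * G x) (Set.Icc e 1) :=
      (hu'cont.mono hIccsub).mul (hGcont e he0 he1)
    have hint1 : IntervalIntegrable (fun x => u' x * G x) volume e t₀ := by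
      apply ContinuousOn.intervalIntegrable
      rw [Set.uIcc_of_le het₀.le]
      exact hu'Gcont.mono (Set.Icc_subset_Icc le_rfl ht₀1)
    have hint2 : IntervalIntegrable (fun x => u' x * G x) volume t₀ 1 := by
      apply ContinuousOn.intervalIntegrable
      rw [Set.uIcc_of_le ht₀1]
      exact hu'Gcont.mono (Set.Icc_subset_Icc het₀.le le_rfl)
    have hsplit : ∫ x in e..1, u' x * G x
        = (∫ x in e..t₀, u' x * G x) + ∫ x in t₀..1, u' x * G x :=
      (intervalIntegral.integral_add_adjacent_intervals hint1 hint2).symm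
    -- norm of u'
    have hu'norm : ∀ x : ℝ, ‖u' x‖ = a1 / (‖(x:ℂ)*η₁ - ζ‖)^2 := by
      intro x
      simp only [hu'def]
      rw [norm_div, norm_neg, norm_pow]
    -- pointwise bound on (e, t₀]
    have hptA : ∀ x ∈ Set.Ioc e t₀,
        ‖u' x * G x‖ ≤ (a1 * ε₁ / c2) * (x^2*a1^2 + r^2)⁻¹ := by
      intro x hx
      have hx0 : 0 < x := lt_trans he0 hx.1
      have hdpos : 0 < c2 * (x^2*a1^2 + r^2) := by positivity
      have hG1 : ‖G x‖ ≤ ε₁ := hGt₀ x hx0 hx.2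
      rw [norm_mul, hu'norm]
      calc a1 / (‖(x:ℂ)*η₁ - ζ‖)^2 * ‖G x‖
          ≤ a1 / (c2 * (x^2*a1^2 + r^2)) * ε₁ := by
            apply mul_le_mul _ hG1 (norm_nonneg _) (by positivity)
            exact div_le_div_of_nonneg_left ha1.le hdpos (hsec2 x hx0.le)
        _ = (a1 * ε₁ / c2) * (x^2*a1^2 + r^2)⁻¹ := by
            field_simp
    have hA : ‖∫ x in e..t₀, u' x * G x‖ ≤ (a1 * ε₁ / c2) * (Real.pi / (2*a1*r)) := by
      have hgc : Continuous fun x : ℝ => (a1*ε₁/c2) * (x^2*a1^2+r^2)⁻¹ :=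
        continuous_const.mul (Continuous.inv₀ (by fun_prop) (fun x => by positivity))
      calc ‖∫ x in e..t₀, u' x * G x‖
          ≤ |∫ x in e..t₀, (a1*ε₁/c2) * (x^2*a1^2+r^2)⁻¹| := by
            apply intervalIntegral.norm_integral_le_abs_of_norm_le _ (hgc.intervalIntegrable _ _)
            rw [Set.uIoc_of_le het₀.le]
            exact (ae_restrict_iff' measurableSet_Ioc).mpr (Eventually.of_forall hptA)
        _ = ∫ x in e..t₀, (a1*ε₁/c2) * (x^2*a1^2+r^2)⁻¹ := by
            apply abs_of_nonneg
            apply intervalIntegral.integral_nonneg het₀.le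
            intro x _
            positivity
        _ = (a1*ε₁/c2) * ∫ x in e..t₀, (x^2*a1^2+r^2)⁻¹ :=
            intervalIntegral.integral_const_mul _ _
        _ ≤ (a1*ε₁/c2) * (Real.pi/(2*a1*r)) := by
            apply mul_le_mul_of_nonneg_left (aux_arctan a1 r ha1 hr e t₀ he0.le) (by positivity)
    -- bound on [t₀, 1]
    have hB : ‖∫ x in t₀..1, u' x * G x‖ ≤ a1 * Mx / (c2 * t₀^2 * a1^2) := by
      have hC : ∀ x ∈ Set.uIoc t₀ (1:ℝ), ‖u' x * G x‖ ≤ a1 * Mx / (c2 * t₀^2 * a1^2) := by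
        intro x hx
        rw [Set.uIoc_of_le ht₀1] at hx
        have hxt₀ : t₀ ≤ x := hx.1.le
        have hd : c * (t₀ * a1) ≤ ‖(x:ℂ)*η₁ - ζ‖ := hlowt x hxt₀
        have hd2 : c2 * t₀^2 * a1^2 ≤ (‖(x:ℂ)*η₁ - ζ‖)^2 := by
          have := mul_le_mul hd hd (by positivity) (norm_nonneg _)
          calc c2 * t₀^2 * a1^2 = (c * (t₀ * a1)) * (c * (t₀ * a1)) := by
                rw [← hcsq]; ring
            _ ≤ ‖(x:ℂ)*η₁ - ζ‖ * ‖(x:ℂ)*η₁ - ζ‖ := this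
            _ = (‖(x:ℂ)*η₁ - ζ‖)^2 := (sq _).symm
        have hGx : ‖G x‖ ≤ Mx := hMx' x ⟨hxt₀, hx.2⟩
        rw [norm_mul, hu'norm]
        have hpos : (0:ℝ) < c2 * t₀^2 * a1^2 := by positivity
        calc a1 / (‖(x:ℂ)*η₁ - ζ‖)^2 * ‖G x‖
            ≤ a1 / (c2 * t₀^2 * a1^2) * Mx := by
              apply mul_le_mul _ hGx (norm_nonneg _) (by positivity)
              exact div_le_div_of_nonneg_left ha1.le hpos hd2
          _ = a1 * Mx / (c2 * t₀^2 * a1^2) := by ring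
      calc ‖∫ x in t₀..1, u' x * G x‖
          ≤ (a1 * Mx / (c2 * t₀^2 * a1^2)) * |1 - t₀| :=
            intervalIntegral.norm_integral_le_of_norm_le_const hC
        _ ≤ a1 * Mx / (c2 * t₀^2 * a1^2) := by
            rw [abs_of_nonneg (by linarith)]
            nlinarith [div_nonneg (mul_nonneg ha1.le hMx)
              (by positivity : (0:ℝ) ≤ c2 * t₀^2 * a1^2)]
    -- boundary terms
    have habs1 : ‖u 1 * G 1‖ ≤ ‖G 1‖ / (c * a1) := by
      have he' : ‖u 1 * G 1‖
          = ‖G 1‖ / ‖((1:ℝ):ℂ)*η₁ - ζ‖ := by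
        simp only [hudef]
        rw [norm_mul, norm_inv, inv_mul_eq_div]
      rw [he']
      exact div_le_div₀ (norm_nonneg _) le_rfl (by positivity) hlow1
    have habse : ‖u e * G e‖ ≤ ‖G e‖ / (c * r) := by
      have he' : ‖u e * G e‖
          = ‖G e‖ / ‖(e:ℂ)*η₁ - ζ‖ := by
        simp only [hudef]
        rw [norm_mul, norm_inv, inv_mul_eq_div]
      rw [he']
      exact div_le_div₀ (norm_nonneg _) le_rfl (by positivity) (hlow e he0.le)
    -- rewrite the integrand
    have hIe : (∫ t in e..1, f t / ((t:ℂ)*η₁ - ζ)) = ∫ x in e..1, u x * f x := by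
      apply intervalIntegral.integral_congr
      intro x _
      simp only [hudef]
      rw [div_eq_mul_inv, mul_comm]
    -- term bounds
    have hρ1 : r < c * a1 * ε / (4 * (‖G 1‖ + 1)) := lt_of_lt_of_le hζρ (min_le_left _ _)
    have hρ2 : r < c2 * t₀^2 * a1 * ε / (4 * (Mx + 1)) := lt_of_lt_of_le hζρ (min_le_right _ _)
    have hG1n : (0:ℝ) ≤ ‖G 1‖ := norm_nonneg _
    have hT1 : r * (‖G 1‖ / (c * a1)) ≤ ε/4 := by
      rw [mul_div_assoc', div_le_iff₀ (by positivity)]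
      have h1 : r * ‖G 1‖ ≤ (c * a1 * ε / (4 * (‖G 1‖ + 1))) * ‖G 1‖ :=
        mul_le_mul_of_nonneg_right hρ1.le hG1n
      have h2 : (c * a1 * ε / (4 * (‖G 1‖ + 1))) * ‖G 1‖ ≤ ε/4 * (c*a1) := by
        rw [div_mul_eq_mul_div, div_le_iff₀ (by positivity)]
        nlinarith [mul_pos (mul_pos hc ha1) hε,
          mul_nonneg (mul_nonneg (mul_nonneg hc.le ha1.le) hε.le) hG1n]
      linarith
    have hT2 : r * (‖G e‖ / (c * r)) ≤ ε/4 := by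
      have heq : r * (‖G e‖/(c*r)) = ‖G e‖/c := by
        field_simp
      rw [heq, div_le_iff₀ hc]
      calc ‖G e‖ ≤ c*ε/4 := hGe
        _ = ε/4*c := by ring
    have hT3 : r * ((a1 * ε₁ / c2) * (Real.pi/(2*a1*r))) = ε/4 := by
      rw [hε₁def]
      field_simp
      ring
    have hT4 : r * (a1 * Mx / (c2 * t₀^2 * a1^2)) ≤ ε/4 := by
      have heq : a1 * Mx / (c2 * t₀^2 * a1^2) = Mx / (c2 * t₀^2 * a1) := by
        field_simp
      rw [heq, mul_div_assoc', div_le_iff₀ (by positivity)]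
      have h1 : r * Mx ≤ (c2 * t₀^2 * a1 * ε / (4 * (Mx + 1))) * Mx :=
        mul_le_mul_of_nonneg_right hρ2.le hMx
      have h2 : (c2 * t₀^2 * a1 * ε / (4 * (Mx + 1))) * Mx ≤ ε/4 * (c2*t₀^2*a1) := by
        rw [div_mul_eq_mul_div, div_le_iff₀ (by positivity)]
        nlinarith [mul_pos (mul_pos (mul_pos hc2 (pow_pos ht₀0 2)) ha1) hε,
          mul_nonneg (mul_nonneg (mul_nonneg (mul_nonneg hc2.le (sq_nonneg t₀)) ha1.le) hε.le) hMx]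
      linarith
    -- assemble
    rw [hIe, hparts, hsplit, norm_mul, norm_mul]
    have habsc' : ‖(1/(2*(Real.pi:ℂ)*Complex.I))‖ = 1/(2*Real.pi) := by
      exact habsc
    rw [habsc']
    have hS : ‖u 1 * G 1 - u e * G e
          - ((∫ x in e..t₀, u' x * G x) + ∫ x in t₀..1, u' x * G x)‖
        ≤ ‖G 1‖/(c*a1) + ‖G e‖/(c*r)
          + ((a1*ε₁/c2)*(Real.pi/(2*a1*r)) + a1*Mx/(c2*t₀^2*a1^2)) := by
      calc ‖u 1 * G 1 - u e * G e
            - ((∫ x in e..t₀, u' x * G x) + ∫ x in t₀..1, u' x * G x)‖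
          ≤ ‖u 1 * G 1 - u e * G e‖
            + ‖(∫ x in e..t₀, u' x * G x) + ∫ x in t₀..1, u' x * G x‖ := norm_sub_le _ _
        _ ≤ (‖u 1 * G 1‖ + ‖u e * G e‖)
            + (‖∫ x in e..t₀, u' x * G x‖ + ‖∫ x in t₀..1, u' x * G x‖) :=
            add_le_add (norm_sub_le _ _) (norm_add_le _ _)
        _ ≤ (‖G 1‖/(c*a1) + ‖G e‖/(c*r))
            + ((a1*ε₁/c2)*(Real.pi/(2*a1*r)) + a1*Mx/(c2*t₀^2*a1^2)) :=
            add_le_add (add_le_add habs1 habse) (add_le_add hA hB)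
        _ = _ := by ring
    have h2π : 1/(2*Real.pi) ≤ (1:ℝ) := by
      rw [div_le_one (by positivity)]
      linarith [Real.pi_gt_three]
    have hζn : ‖ζ‖ = r := rfl
    rw [hζn]
    calc r * (1/(2*Real.pi) * ‖u 1 * G 1 - u e * G e
          - ((∫ x in e..t₀, u' x * G x) + ∫ x in t₀..1, u' x * G x)‖)
        ≤ r * ‖u 1 * G 1 - u e * G e
          - ((∫ x in e..t₀, u' x * G x) + ∫ x in t₀..1, u' x * G x)‖ := by
          apply mul_le_mul_of_nonneg_left _ hr.le
          exact mul_le_of_le_one_left (norm_nonneg _) h2π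
      _ ≤ r * (‖G 1‖/(c*a1) + ‖G e‖/(c*r)
          + ((a1*ε₁/c2)*(Real.pi/(2*a1*r)) + a1*Mx/(c2*t₀^2*a1^2))) :=
          mul_le_mul_of_nonneg_left hS hr.le
      _ = r * (‖G 1‖/(c*a1)) + r * (‖G e‖/(c*r))
          + (r * ((a1*ε₁/c2)*(Real.pi/(2*a1*r))) + r * (a1*Mx/(c2*t₀^2*a1^2))) := by ring
      _ ≤ ε/4 + ε/4 + (ε/4 + ε/4) := by
          refine add_le_add (add_le_add hT1 hT2) (add_le_add (le_of_eq hT3) hT4)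
      _ = ε := by ring
  -- conclude by passing to the limit
  have htend : Tendsto (fun e : ℝ => ζ * ((1 / (2 * (Real.pi:ℂ) * Complex.I)) *
      ∫ t in e..1, f t / ((t:ℂ) * η₁ - ζ))) (𝓝[>] (0:ℝ)) (𝓝 (ζ * Φ ζ)) :=
    (hΦ ζ hoff).const_mul ζ
  have habsT : Tendsto (fun e : ℝ => ‖ζ * ((1 / (2 * (Real.pi:ℂ) * Complex.I)) *
      ∫ t in e..1, f t / ((t:ℂ) * η₁ - ζ))‖) (𝓝[>] (0:ℝ)) (𝓝 (‖ζ * Φ ζ‖)) :=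
    (continuous_norm.tendsto (ζ * Φ ζ)).comp htend
  exact le_of_tendsto habsT hbound
end

section
/- Let η₁ ∈ ℂ ∖ {0} and let g be holomorphic on an open set containing the half-open segment {t η₁ : 0 < t ≤ 1}, such that the primitive G(t) := lim_{ε→0⁺} ∫_ε^t g(s η₁) η₁ ds exists for every t ∈ (0, 1] and G(t) → 0 as t → 0⁺. Let Φ(ζ) = (1/(2πi)) lim_{ε→0⁺} ∫_ε^1 g(t η₁) η₁ / (t η₁ − ζ) dt for ζ off the closed segment {t η₁ : 0 ≤ t ≤ 1}. Then for every t₀ ∈ (0, 1): lim_{ε→0⁺} ( Φ(t₀ η₁ + i ε η₁) − Φ(t₀ η₁ − i ε η₁) ) = g(t₀ η₁). That is, the variation (jump across the cut) of the adapted major Φ equals g. -/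
open MeasureTheory Topology Filter


namespace Stmt13Aux

lemma pois_cont (ε t₀ : ℝ) (hε : ε ≠ 0) :
    Continuous (fun t : ℝ => ε / ((t - t₀) ^ 2 + ε ^ 2)) := by
  apply Continuous.div continuous_const (by fun_prop)
  intro t
  have : 0 < (t - t₀) ^ 2 + ε ^ 2 := by positivity
  exact ne_of_gt this

lemma poisson_integral (ε t₀ a b : ℝ) (hε : 0 < ε) :
    ∫ t in a..b, ε / ((t - t₀) ^ 2 + ε ^ 2)
      = Real.arctan ((b - t₀) / ε) - Real.arctan ((a - t₀) / ε) := by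
  have h : ∀ t : ℝ, HasDerivAt (fun t => Real.arctan ((t - t₀) / ε))
      (ε / ((t - t₀) ^ 2 + ε ^ 2)) t := by
    intro t
    have h1 : HasDerivAt (fun t : ℝ => (t - t₀) / ε) (1 / ε) t := by
      simpa using ((hasDerivAt_id t).sub_const t₀).div_const ε
    have h2 := (Real.hasDerivAt_arctan ((t - t₀) / ε)).comp t h1
    refine h2.congr_deriv ?_
    have hd : (t - t₀) ^ 2 + ε ^ 2 ≠ 0 := by positivity
    field_simp
    ring
  exact intervalIntegral.integral_eq_sub_of_hasDerivAt (fun t _ => h t)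
    ((pois_cont ε t₀ hε.ne').continuousOn.intervalIntegrable)

lemma poisson_le_pi (ε t₀ a b : ℝ) (hε : 0 < ε) (hab : a ≤ b) :
    ∫ t in a..b, ε / ((t - t₀) ^ 2 + ε ^ 2) ≤ Real.pi := by
  rw [poisson_integral ε t₀ a b hε]
  have h1 := Real.arctan_lt_pi_div_two ((b - t₀) / ε)
  have h2 := Real.neg_pi_div_two_lt_arctan ((a - t₀) / ε)
  linarith

lemma poisson_tendsto (c t₀ : ℝ) (h1 : c < t₀) (h2 : t₀ < 1) :
    Tendsto (fun ε : ℝ => ∫ t in c..(1:ℝ), ε / ((t - t₀) ^ 2 + ε ^ 2)) (𝓝[>] 0)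
      (𝓝 Real.pi) := by
  have ha : Tendsto (fun ε : ℝ => Real.arctan ((1 - t₀) / ε)) (𝓝[>] 0)
      (𝓝 (Real.pi / 2)) := by
    have := (tendsto_nhds_of_tendsto_nhdsWithin Real.tendsto_arctan_atTop).comp
      ((tendsto_inv_nhdsGT_zero).const_mul_atTop (by linarith : (0:ℝ) < 1 - t₀))
    simpa [Function.comp_def, div_eq_mul_inv] using this
  have hb : Tendsto (fun ε : ℝ => Real.arctan ((c - t₀) / ε)) (𝓝[>] 0)
      (𝓝 (-(Real.pi / 2))) := by
    have hneg : Tendsto (fun ε : ℝ => (c - t₀) * ε⁻¹) (𝓝[>] 0) atBot := by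
      have h := (tendsto_inv_nhdsGT_zero).const_mul_atTop (by linarith : (0:ℝ) < t₀ - c)
      rw [show (fun ε : ℝ => (c - t₀) * ε⁻¹) = (fun x : ℝ => -((t₀ - c) * x⁻¹)) by
        funext ε; ring]
      exact tendsto_neg_atBot_iff.mpr h
    have := (tendsto_nhds_of_tendsto_nhdsWithin Real.tendsto_arctan_atBot).comp hneg
    simpa [Function.comp_def, div_eq_mul_inv] using this
  have := ha.sub hb
  rw [show Real.pi / 2 - -(Real.pi / 2) = Real.pi by ring] at this
  apply Tendsto.congr' _ this
  filter_upwards [self_mem_nhdsWithin] with ε (hε : 0 < ε)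
  rw [poisson_integral ε t₀ c 1 hε]

lemma poisson_approx (c t₀ : ℝ) (hc : c < t₀) (h2 : t₀ < 1) (f : ℝ → ℂ)
    (hf : ContinuousOn f (Set.Icc c 1)) (hf0 : ContinuousAt f t₀) :
    Tendsto (fun ε : ℝ =>
        ∫ t in c..(1:ℝ), (f t - f t₀) * ((ε / ((t - t₀) ^ 2 + ε ^ 2) : ℝ) : ℂ))
      (𝓝[>] 0) (𝓝 0) := by
  rw [NormedAddCommGroup.tendsto_nhds_zero]
  intro η hη
  -- bound for f - f t₀ on [c,1]
  obtain ⟨M₀, hM₀⟩ := isCompact_Icc.exists_bound_of_continuousOn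
    (hf.sub (continuousOn_const (c := f t₀)))
  set M := max M₀ 1 with hMdef
  have hM1 : (0:ℝ) < M := lt_of_lt_of_le one_pos (le_max_right _ _)
  have hM : ∀ t ∈ Set.Icc c 1, ‖f t - f t₀‖ ≤ M := fun t ht =>
    le_trans (hM₀ t ht) (le_max_left _ _)
  set η₂ := η / (2 * (Real.pi + 1)) with hη₂def
  have hπ : (0:ℝ) < Real.pi := Real.pi_pos
  have hη₂ : 0 < η₂ := by positivity
  -- continuity at t₀ gives δ
  obtain ⟨δ₀, hδ₀, hδ₀'⟩ := Metric.continuousAt_iff.mp hf0 η₂ hη₂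
  set δ := min (δ₀ / 2) (min ((t₀ - c) / 2) ((1 - t₀) / 2)) with hδdef
  have hδpos : 0 < δ := by
    apply lt_min (by positivity) (lt_min (by linarith) (by linarith))
  have hδc : c < t₀ - δ := by
    have : δ ≤ (t₀ - c) / 2 := le_trans (min_le_right _ _) (min_le_left _ _)
    linarith
  have hδ1 : t₀ + δ < 1 := by
    have : δ ≤ (1 - t₀) / 2 := le_trans (min_le_right _ _) (min_le_right _ _)
    linarith
  have hδsmall : ∀ t : ℝ, |t - t₀| ≤ δ → ‖f t - f t₀‖ ≤ η₂ := by
    intro t ht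
    have : dist t t₀ < δ₀ := by
      rw [Real.dist_eq]
      have : δ ≤ δ₀ / 2 := min_le_left _ _
      linarith [ht]
    have h := hδ₀' this
    rw [dist_eq_norm] at h
    exact le_of_lt h
  -- the eventual bound
  have key : ∀ ε : ℝ, 0 < ε →
      ‖∫ t in c..(1:ℝ), (f t - f t₀) * ((ε / ((t - t₀) ^ 2 + ε ^ 2) : ℝ) : ℂ)‖
        ≤ 2 * M * (1 - c) * ε / δ ^ 2 + η₂ * Real.pi := by
    intro ε hε
    set p : ℝ → ℝ := fun t => ε / ((t - t₀) ^ 2 + ε ^ 2) with hp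
    have hpc : Continuous p := pois_cont ε t₀ hε.ne'
    set F : ℝ → ℂ := fun t => (f t - f t₀) * ((p t : ℝ) : ℂ) with hF
    have hFc : ContinuousOn F (Set.Icc c 1) :=
      (hf.sub continuousOn_const).mul (Complex.continuous_ofReal.comp hpc).continuousOn
    have hpnn : ∀ t, 0 ≤ p t := by
      intro t
      apply div_nonneg hε.le
      positivity
    have hInt : ∀ a b : ℝ, c ≤ a → a ≤ b → b ≤ 1 → IntervalIntegrable F volume a b := by
      intro a b hca hab hb1
      apply (hFc.mono _).intervalIntegrable
      rw [Set.uIcc_of_le hab]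
      exact fun x hx => ⟨le_trans hca hx.1, le_trans hx.2 hb1⟩
    have hsplit : ∫ t in c..(1:ℝ), F t =
        (∫ t in c..(t₀ - δ), F t) + (∫ t in (t₀ - δ)..(t₀ + δ), F t)
          + ∫ t in (t₀ + δ)..(1:ℝ), F t := by
      rw [intervalIntegral.integral_add_adjacent_intervals
          (hInt c (t₀ - δ) le_rfl hδc.le (by linarith))
          (hInt (t₀ - δ) (t₀ + δ) hδc.le (by linarith) hδ1.le),
        intervalIntegral.integral_add_adjacent_intervals
          (hInt c (t₀ + δ) le_rfl (by linarith) hδ1.le)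
          (hInt (t₀ + δ) 1 (by linarith) hδ1.le le_rfl)]
    have houter : ∀ a b : ℝ, c ≤ a → a ≤ b → b ≤ 1 →
        (∀ t ∈ Set.Ioc a b, δ ≤ |t - t₀|) →
        ‖∫ t in a..b, F t‖ ≤ M * (ε / δ ^ 2) * (1 - c) := by
      intro a b hca hab hb1 hfar
      have hb : ‖∫ t in a..b, F t‖ ≤ M * (ε / δ ^ 2) * |b - a| := by
        apply intervalIntegral.norm_integral_le_of_norm_le_const
        intro t ht
        rw [Set.uIoc_of_le hab] at ht
        have ht' : t ∈ Set.Icc c 1 := ⟨le_trans hca ht.1.le, le_trans ht.2 hb1⟩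
        have h1 : ‖f t - f t₀‖ ≤ M := hM t ht'
        have h2 : ‖((p t : ℝ) : ℂ)‖ ≤ ε / δ ^ 2 := by
          rw [Complex.norm_real, Real.norm_eq_abs, abs_of_nonneg (hpnn t)]
          apply div_le_div_of_nonneg_left hε.le (by positivity)
          have := hfar t ht
          nlinarith [sq_abs (t - t₀), sq_nonneg ε]
        calc ‖F t‖ = ‖f t - f t₀‖ * ‖((p t : ℝ) : ℂ)‖ := norm_mul _ _
          _ ≤ M * (ε / δ ^ 2) := mul_le_mul h1 h2 (norm_nonneg _) hM1.le
      apply le_trans hb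
      apply mul_le_mul_of_nonneg_left _ (by positivity)
      rw [abs_of_nonneg (by linarith)]
      linarith
    have hmid : ‖∫ t in (t₀ - δ)..(t₀ + δ), F t‖ ≤ η₂ * Real.pi := by
      have hbd : ∀ᵐ t ∂(volume.restrict (Set.uIoc (t₀ - δ) (t₀ + δ))),
          ‖F t‖ ≤ η₂ * p t := by
        rw [ae_restrict_iff' measurableSet_uIoc]
        apply Filter.Eventually.of_forall
        intro t ht
        rw [Set.uIoc_of_le (by linarith)] at ht
        have habs : |t - t₀| ≤ δ := by
          rw [abs_le]; constructor <;> [linarith [ht.1]; linarith [ht.2]]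
        calc ‖F t‖ = ‖f t - f t₀‖ * |p t| := by
              rw [norm_mul, Complex.norm_real, Real.norm_eq_abs]
          _ ≤ η₂ * p t := by
              rw [abs_of_nonneg (hpnn t)]
              exact mul_le_mul_of_nonneg_right (hδsmall t habs) (hpnn t)
      have h1 := intervalIntegral.norm_integral_le_abs_of_norm_le hbd
        ((Continuous.continuousOn (continuous_const.mul hpc)).intervalIntegrable)
      rw [abs_of_nonneg (intervalIntegral.integral_nonneg (by linarith)
        (fun t _ => mul_nonneg hη₂.le (hpnn t)))] at h1
      apply le_trans h1
      rw [intervalIntegral.integral_const_mul]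
      apply mul_le_mul_of_nonneg_left _ hη₂.le
      exact poisson_le_pi ε t₀ _ _ hε (by linarith)
    have houter1 := houter c (t₀ - δ) le_rfl hδc.le (by linarith)
      (fun t ht => by rw [abs_sub_comm, abs_of_nonneg (by linarith [ht.2])]; linarith [ht.2])
    have houter2 := houter (t₀ + δ) 1 (by linarith) hδ1.le le_rfl
      (fun t ht => by rw [abs_of_nonneg (by linarith [ht.1])]; linarith [ht.1])
    calc ‖∫ t in c..(1:ℝ), F t‖
        ≤ ‖(∫ t in c..(t₀ - δ), F t) + (∫ t in (t₀ - δ)..(t₀ + δ), F t)‖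
          + ‖∫ t in (t₀ + δ)..(1:ℝ), F t‖ := by rw [hsplit]; exact norm_add_le _ _
      _ ≤ ‖∫ t in c..(t₀ - δ), F t‖ + ‖∫ t in (t₀ - δ)..(t₀ + δ), F t‖
          + ‖∫ t in (t₀ + δ)..(1:ℝ), F t‖ := by
            gcongr; exact norm_add_le _ _
      _ ≤ M * (ε / δ ^ 2) * (1 - c) + η₂ * Real.pi + M * (ε / δ ^ 2) * (1 - c) := by
            gcongr
      _ = 2 * M * (1 - c) * ε / δ ^ 2 + η₂ * Real.pi := by ring
  -- conclude
  have hRHS : Tendsto (fun ε : ℝ => 2 * M * (1 - c) * ε / δ ^ 2 + η₂ * Real.pi)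
      (𝓝[>] 0) (𝓝 (η₂ * Real.pi)) := by
    have : Tendsto (fun ε : ℝ => 2 * M * (1 - c) * ε / δ ^ 2) (𝓝[>] 0) (𝓝 0) := by
      have h0 : Continuous (fun ε : ℝ => 2 * M * (1 - c) * ε / δ ^ 2) :=
        (continuous_const.mul continuous_id).div_const (δ ^ 2)
      have h' := (h0.tendsto (0:ℝ)).mono_left (nhdsWithin_le_nhds (s := Set.Ioi 0))
      simpa using h'
    simpa using this.add tendsto_const_nhds
  have hlt : η₂ * Real.pi < η := by
    rw [hη₂def]
    rw [div_mul_eq_mul_div, div_lt_iff₀ (by positivity)]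
    nlinarith
  filter_upwards [self_mem_nhdsWithin, hRHS.eventually_lt_const hlt] with ε hε hev
  exact lt_of_le_of_lt (key ε hε) hev


end Stmt13Aux

open Stmt13Aux


/-- var[Φ] = g (Proposition 6.3, Part II, CNP Pré II.4.2.1): the jump of the
adapted major Φ across the cut segment equals the minor g. -/
theorem stmt_13 (η₁ : ℂ) (hη₁ : η₁ ≠ 0)
    (V : Set ℂ) (hV : IsOpen V)
    (hseg : ∀ t : ℝ, 0 < t → t ≤ 1 → (t : ℂ) * η₁ ∈ V)
    (g : ℂ → ℂ) (hg : DifferentiableOn ℂ g V)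
    (G : ℝ → ℂ) (hG0 : G 0 = 0)
    (hG : ∀ t : ℝ, 0 < t → t ≤ 1 →
      Tendsto (fun ε : ℝ => ∫ s in ε..t, g ((s : ℂ) * η₁) * η₁) (𝓝[>] 0) (𝓝 (G t)))
    (hGlim : Tendsto G (𝓝[>] 0) (𝓝 0))
    (Φ : ℂ → ℂ)
    (hΦ : ∀ ζ : ℂ, (∀ t : ℝ, 0 ≤ t → t ≤ 1 → ζ ≠ (t : ℂ) * η₁) →
      Tendsto (fun ε : ℝ =>
          (1 / (2 * (Real.pi : ℂ) * Complex.I)) *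
            ∫ t in ε..1, g ((t : ℂ) * η₁) * η₁ / ((t : ℂ) * η₁ - ζ))
        (𝓝[>] 0) (𝓝 (Φ ζ))) :
    ∀ t₀ : ℝ, 0 < t₀ → t₀ < 1 →
      Tendsto (fun ε : ℝ =>
          Φ ((t₀ : ℂ) * η₁ + (ε : ℂ) * Complex.I * η₁) -
            Φ ((t₀ : ℂ) * η₁ - (ε : ℂ) * Complex.I * η₁))
        (𝓝[>] 0) (𝓝 (g ((t₀ : ℂ) * η₁))) := by
  intro t₀ ht₀ ht₁
  set c : ℝ := t₀ / 2 with hcdef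
  have hc0 : 0 < c := by positivity
  have hct : c < t₀ := by rw [hcdef]; linarith
  have hc1 : c < 1 := by linarith
  set f : ℝ → ℂ := fun t => g ((t : ℂ) * η₁) with hfdef
  -- continuity of f at positive parameters
  have hfc : ∀ t : ℝ, 0 < t → t ≤ 1 → ContinuousAt f t := by
    intro t ht ht1
    have hmem : ((t : ℝ) : ℂ) * η₁ ∈ V := hseg t ht ht1
    have hgc : ContinuousAt g ((t : ℂ) * η₁) :=
      (hg.continuousOn.continuousAt (hV.mem_nhds hmem))
    have h2 : ContinuousAt (fun x : ℝ => (x : ℂ) * η₁) t :=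
      (Complex.continuous_ofReal.mul continuous_const).continuousAt
    exact ContinuousAt.comp hgc h2
  have hfcOn : ∀ a b : ℝ, 0 < a → b ≤ 1 → ContinuousOn f (Set.Icc a b) := by
    intro a b ha hb1 t ht
    exact (hfc t (lt_of_lt_of_le ha ht.1) (le_trans ht.2 hb1)).continuousWithinAt
  have hfηInt : ∀ a b : ℝ, 0 < a → a ≤ b → b ≤ 1 →
      IntervalIntegrable (fun t => f t * η₁) volume a b := by
    intro a b ha hab hb1
    apply ContinuousOn.intervalIntegrable
    rw [Set.uIcc_of_le hab]
    exact (hfcOn a b ha hb1).mul continuousOn_const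
  -- representation of G
  have hGrep : ∀ s : ℝ, 0 < s → s ≤ 1 → ∀ t : ℝ, 0 < t → t ≤ 1 →
      G t = G s + ∫ x in s..t, f x * η₁ := by
    intro s hs hs1 t ht ht1
    have hT := (hG t ht ht1).sub (hG s hs hs1)
    have hev : ∀ᶠ ε : ℝ in 𝓝[>] 0,
        ((∫ x in ε..t, f x * η₁) - ∫ x in ε..s, f x * η₁) = ∫ x in s..t, f x * η₁ := by
      filter_upwards [Ioo_mem_nhdsGT_of_mem (Set.mem_Ico.mpr ⟨le_refl 0, lt_min hs ht⟩)]
        with ε hε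
      obtain ⟨hε0, hεm⟩ := hε
      have h1 : IntervalIntegrable (fun x => f x * η₁) volume ε s :=
        hfηInt ε s hε0 (le_of_lt (lt_of_lt_of_le hεm (min_le_left _ _))) hs1
      have h2 : IntervalIntegrable (fun x => f x * η₁) volume s t := by
        rcases le_total s t with h | h
        · exact hfηInt s t hs h ht1
        · exact (hfηInt t s ht h hs1).symm
      rw [← intervalIntegral.integral_add_adjacent_intervals h1 h2]
      abel
    have := tendsto_nhds_unique (hT.congr' hev) tendsto_const_nhds
    rw [← this]; abel
  -- derivative of G on (0,1)
  have hG' : ∀ t : ℝ, 0 < t → t < 1 → HasDerivAt G (f t * η₁) t := by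
    intro t ht ht1
    set s : ℝ := t / 2 with hsdef
    have hs : 0 < s := by positivity
    have hst : s < t := by rw [hsdef]; linarith
    have hder : HasDerivAt (fun u => G s + ∫ x in s..u, f x * η₁) (f t * η₁) t := by
      apply HasDerivAt.const_add
      apply intervalIntegral.integral_hasDerivAt_right
        (hfηInt s t hs hst.le ht1.le)
      · exact ContinuousAt.stronglyMeasurableAtFilter (isOpen_Ioo (a := (0:ℝ)) (b := 1))
          (fun x hx => (hfc x hx.1 hx.2.le).mul continuousAt_const) t ⟨ht, ht1⟩
      · exact (hfc t ht ht1.le).mul continuousAt_const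
    apply hder.congr_of_eventuallyEq
    filter_upwards [Ioo_mem_nhds ht ht1] with x hx
    exact hGrep s hs (by linarith) x hx.1 hx.2.le
  -- continuity of G on [0, c]
  have hGc : ContinuousOn G (Set.Icc 0 c) := by
    intro t ht
    rcases eq_or_lt_of_le ht.1 with h0 | h0
    · subst h0
      have h1 : Tendsto G (𝓝[Set.Ioi (0:ℝ)] 0) (𝓝 (G 0)) := by rw [hG0]; exact hGlim
      have h2 : Tendsto G (pure (0:ℝ)) (𝓝 (G 0)) := tendsto_pure_nhds G 0
      have h3 : Tendsto G (𝓝[insert (0:ℝ) (Set.Ioi 0)] 0) (𝓝 (G 0)) := by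
        rw [nhdsWithin_insert]; exact tendsto_sup.mpr ⟨h2, h1⟩
      apply h3.mono_left (nhdsWithin_mono 0 _)
      intro x hx
      rcases eq_or_lt_of_le hx.1 with h | h
      · exact Or.inl h.symm
      · exact Or.inr h
    · set s : ℝ := t / 2 with hsdef
      have hs : 0 < s := by positivity
      have hst : s < t := by rw [hsdef]; linarith
      have hs1 : s ≤ 1 := by
        have := ht.2; rw [hsdef]; linarith
      have hIcc : Set.uIcc s 1 = Set.Icc s 1 := Set.uIcc_of_le hs1
      have hIntOn : IntegrableOn (fun x => f x * η₁) (Set.uIcc s 1) volume := by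
        rw [hIcc]
        exact ((hfcOn s 1 hs le_rfl).mul continuousOn_const).integrableOn_Icc
      have hFcont : ContinuousOn (fun u => G s + ∫ x in s..u, f x * η₁) (Set.Icc s 1) := by
        rw [← hIcc]
        exact continuousOn_const.add (intervalIntegral.continuousOn_primitive_interval hIntOn)
      have htmem : t ∈ Set.Icc s 1 := ⟨hst.le, le_trans ht.2 hc1.le⟩
      have hGF : ContinuousWithinAt G (Set.Icc s 1) t := by
        apply (hFcont t htmem).congr
        · intro x hx
          exact hGrep s hs hs1 x (lt_of_lt_of_le hs hx.1) hx.2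
        · exact hGrep s hs hs1 t (lt_of_lt_of_le hs htmem.1) htmem.2
      apply hGF.mono_of_mem_nhdsWithin
      apply mem_nhdsWithin.mpr
      exact ⟨Set.Ioi s, isOpen_Ioi, hst,
        fun x hx => ⟨hx.1.le, le_trans hx.2.2 hc1.le⟩⟩
  -- bound for G on [0,c]
  obtain ⟨MG₀, hMG₀⟩ := isCompact_Icc.exists_bound_of_continuousOn hGc
  set MG : ℝ := max MG₀ 1 with hMGdef
  have hMGpos : (0:ℝ) < MG := lt_of_lt_of_le one_pos (le_max_right _ _)
  have hMG : ∀ t ∈ Set.Icc (0:ℝ) c, ‖G t‖ ≤ MG :=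
    fun t ht => le_trans (hMG₀ t ht) (le_max_left _ _)
  -- the kernels
  set P : ℝ → ℝ → ℂ :=
    fun ε t => (2 * Complex.I) * ((ε / ((t - t₀) ^ 2 + ε ^ 2) : ℝ) : ℂ) with hPdef
  set Q : ℝ → ℝ → ℂ :=
    fun ε t => (2 * Complex.I) *
      ((-(ε * (2 * (t - t₀))) / (((t - t₀) ^ 2 + ε ^ 2) ^ 2) : ℝ) : ℂ) with hQdef
  have hPd : ∀ ε : ℝ, ε ≠ 0 → ∀ t : ℝ, HasDerivAt (P ε) (Q ε t) t := by
    intro ε hε t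
    have hd : ((t - t₀) ^ 2 + ε ^ 2) ≠ 0 := by positivity
    have h1 : HasDerivAt (fun u : ℝ => (u - t₀) ^ 2 + ε ^ 2) (2 * (t - t₀)) t := by
      have h := (((hasDerivAt_id t).sub_const t₀).pow 2).add_const (ε ^ 2)
      simpa using h
    have h2 : HasDerivAt (fun u : ℝ => ε / ((u - t₀) ^ 2 + ε ^ 2))
        (-(ε * (2 * (t - t₀))) / (((t - t₀) ^ 2 + ε ^ 2) ^ 2)) t := by
      have h := (h1.inv hd).const_mul ε
      have heq : (fun u : ℝ => ε / ((u - t₀) ^ 2 + ε ^ 2))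
          = fun u : ℝ => ε * ((u - t₀) ^ 2 + ε ^ 2)⁻¹ := by
        funext u; rw [div_eq_mul_inv]
      rw [heq]
      refine h.congr_deriv ?_
      field_simp
    exact (h2.ofReal_comp).const_mul (2 * Complex.I)
  have hPcont : ∀ ε : ℝ, ε ≠ 0 → Continuous (P ε) := by
    intro ε hε
    exact continuous_const.mul (Complex.continuous_ofReal.comp (pois_cont ε t₀ hε))
  have hQcont : ∀ ε : ℝ, ε ≠ 0 → Continuous (Q ε) := by
    intro ε hε
    apply continuous_const.mul
    apply Complex.continuous_ofReal.comp
    apply Continuous.div (by fun_prop) (by fun_prop)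
    intro t
    have : (0:ℝ) < ((t - t₀) ^ 2 + ε ^ 2) ^ 2 := by positivity
    exact ne_of_gt this
  -- nonvanishing denominators
  have hne : ∀ ε : ℝ, ε ≠ 0 → ∀ t : ℝ, ((t:ℂ) - t₀ - ε * Complex.I) ≠ 0 := by
    intro ε hε t h
    have him := congrArg Complex.im h
    simp at him
    exact hε him
  have hne' : ∀ ε : ℝ, ε ≠ 0 → ∀ t : ℝ, ((t:ℂ) - t₀ + ε * Complex.I) ≠ 0 := by
    intro ε hε t h
    have him := congrArg Complex.im h
    simp at him
    exact hε him
  have hsum : ∀ ε t : ℝ, ((t:ℂ) - t₀ - ε * Complex.I) * ((t:ℂ) - t₀ + ε * Complex.I)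
      = (((t - t₀) ^ 2 + ε ^ 2 : ℝ) : ℂ) := by
    intro ε t
    push_cast
    linear_combination (-(ε:ℂ) ^ 2) * Complex.I_sq
  have hdcast : ∀ ε : ℝ, ε ≠ 0 → ∀ t : ℝ, (((t - t₀) ^ 2 + ε ^ 2 : ℝ) : ℂ) ≠ 0 := by
    intro ε hε t
    rw [← hsum]
    exact mul_ne_zero (hne ε hε t) (hne' ε hε t)
  -- the kernel identity
  have hker : ∀ ε : ℝ, 0 < ε → ∀ t : ℝ,
      g ((t:ℂ) * η₁) * η₁ / ((t:ℂ) * η₁ - ((t₀:ℂ) * η₁ + (ε:ℂ) * Complex.I * η₁))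
        - g ((t:ℂ) * η₁) * η₁ / ((t:ℂ) * η₁ - ((t₀:ℂ) * η₁ - (ε:ℂ) * Complex.I * η₁))
      = f t * P ε t := by
    intro ε hε t
    have h1 := hne ε hε.ne' t
    have h2 := hne' ε hε.ne' t
    have e1 : (t:ℂ) * η₁ - ((t₀:ℂ) * η₁ + (ε:ℂ) * Complex.I * η₁)
        = ((t:ℂ) - t₀ - ε * Complex.I) * η₁ := by ring
    have e2 : (t:ℂ) * η₁ - ((t₀:ℂ) * η₁ - (ε:ℂ) * Complex.I * η₁)
        = ((t:ℂ) - t₀ + ε * Complex.I) * η₁ := by ring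
    rw [e1, e2, mul_div_mul_right _ _ hη₁, mul_div_mul_right _ _ hη₁,
      div_sub_div _ _ h1 h2, hsum ε t]
    show _ = f t * ((2 * Complex.I) * _)
    rw [Complex.ofReal_div]
    have e3 : f t * (2 * Complex.I * ((ε:ℂ) / (((t - t₀) ^ 2 + ε ^ 2 : ℝ) : ℂ)))
        = (f t * (2 * Complex.I * (ε:ℂ))) / (((t - t₀) ^ 2 + ε ^ 2 : ℝ) : ℂ) := by
      ring
    rw [e3, div_eq_div_iff (hdcast ε hε.ne' t) (hdcast ε hε.ne' t), hfdef]
    ring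
  -- the master identity for each ε > 0
  have key : ∀ ε : ℝ, 0 < ε →
      Φ ((t₀:ℂ) * η₁ + (ε:ℂ) * Complex.I * η₁) - Φ ((t₀:ℂ) * η₁ - (ε:ℂ) * Complex.I * η₁)
        = (1 / (2 * (Real.pi : ℂ) * Complex.I)) *
          ((η₁⁻¹ * P ε c * G c - ∫ t in (0:ℝ)..c, (η₁⁻¹ * Q ε t) * G t)
            + ∫ t in c..(1:ℝ), f t * P ε t) := by
    intro ε hε
    set ζp : ℂ := (t₀:ℂ) * η₁ + (ε:ℂ) * Complex.I * η₁ with hζp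
    set ζm : ℂ := (t₀:ℂ) * η₁ - (ε:ℂ) * Complex.I * η₁ with hζm
    have hoffp : ∀ t : ℝ, 0 ≤ t → t ≤ 1 → ζp ≠ (t:ℂ) * η₁ := by
      intro t _ _ h
      have h2 : ((t:ℂ) - t₀ - ε * Complex.I) * η₁ = 0 := by
        rw [hζp] at h; linear_combination -h
      rcases mul_eq_zero.mp h2 with h3 | h3
      · exact hne ε hε.ne' t h3
      · exact hη₁ h3
    have hoffm : ∀ t : ℝ, 0 ≤ t → t ≤ 1 → ζm ≠ (t:ℂ) * η₁ := by
      intro t _ _ h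
      have h2 : ((t:ℂ) - t₀ + ε * Complex.I) * η₁ = 0 := by
        rw [hζm] at h; linear_combination -h
      rcases mul_eq_zero.mp h2 with h3 | h3
      · exact hne' ε hε.ne' t h3
      · exact hη₁ h3
    have hT := (hΦ ζp hoffp).sub (hΦ ζm hoffm)
    -- denominators nonzero
    have hdp : ∀ t : ℝ, (t:ℂ) * η₁ - ζp ≠ 0 := by
      intro t
      rw [hζp, show (t:ℂ) * η₁ - ((t₀:ℂ) * η₁ + (ε:ℂ) * Complex.I * η₁)
        = ((t:ℂ) - t₀ - ε * Complex.I) * η₁ by ring]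
      exact mul_ne_zero (hne ε hε.ne' t) hη₁
    have hdm : ∀ t : ℝ, (t:ℂ) * η₁ - ζm ≠ 0 := by
      intro t
      rw [hζm, show (t:ℂ) * η₁ - ((t₀:ℂ) * η₁ - (ε:ℂ) * Complex.I * η₁)
        = ((t:ℂ) - t₀ + ε * Complex.I) * η₁ by ring]
      exact mul_ne_zero (hne' ε hε.ne' t) hη₁
    -- integrability of the two integrands on any [a,b] ⊆ (0,1]
    have hIk : ∀ (ζ : ℂ), (∀ t : ℝ, (t:ℂ) * η₁ - ζ ≠ 0) → ∀ a b : ℝ, 0 < a → a ≤ b → b ≤ 1 →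
        IntervalIntegrable (fun t : ℝ => g ((t:ℂ) * η₁) * η₁ / ((t:ℂ) * η₁ - ζ)) volume a b := by
      intro ζ hζ a b ha hab hb1
      apply ContinuousOn.intervalIntegrable
      rw [Set.uIcc_of_le hab]
      apply ContinuousOn.div
      · exact (hfcOn a b ha hb1).mul continuousOn_const
      · exact ((Complex.continuous_ofReal.mul continuous_const).sub continuous_const).continuousOn
      · exact fun t _ => hζ t
    have hfPInt : ∀ a b : ℝ, 0 < a → a ≤ b → b ≤ 1 →
        IntervalIntegrable (fun t => f t * P ε t) volume a b := by
      intro a b ha hab hb1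
      apply ContinuousOn.intervalIntegrable
      rw [Set.uIcc_of_le hab]
      exact (hfcOn a b ha hb1).mul (hPcont ε hε.ne').continuousOn
    -- eventual form of the approximating integrals
    have hev : ∀ᶠ δ : ℝ in 𝓝[>] 0,
        ((1 / (2 * (Real.pi : ℂ) * Complex.I)) *
            ∫ t in δ..1, g ((t:ℂ) * η₁) * η₁ / ((t:ℂ) * η₁ - ζp))
          - ((1 / (2 * (Real.pi : ℂ) * Complex.I)) *
            ∫ t in δ..1, g ((t:ℂ) * η₁) * η₁ / ((t:ℂ) * η₁ - ζm))
        = (1 / (2 * (Real.pi : ℂ) * Complex.I)) *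
            (((η₁⁻¹ * P ε c * G c - η₁⁻¹ * P ε δ * G δ
                - ∫ t in δ..c, (η₁⁻¹ * Q ε t) * G t)
              + ∫ t in c..(1:ℝ), f t * P ε t)) := by
      filter_upwards [Ioo_mem_nhdsGT_of_mem (Set.mem_Ico.mpr ⟨le_refl (0:ℝ), hc0⟩)]
        with δ hδ
      obtain ⟨hδ0, hδc⟩ := hδ
      rw [← mul_sub]
      congr 1
      rw [← intervalIntegral.integral_sub (hIk ζp hdp δ 1 hδ0 (by linarith) le_rfl)
        (hIk ζm hdm δ 1 hδ0 (by linarith) le_rfl)]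
      have hcg : (∫ t in δ..(1:ℝ), (g ((t:ℂ) * η₁) * η₁ / ((t:ℂ) * η₁ - ζp)
          - g ((t:ℂ) * η₁) * η₁ / ((t:ℂ) * η₁ - ζm)))
          = ∫ t in δ..(1:ℝ), f t * P ε t := by
        apply intervalIntegral.integral_congr
        intro t _
        exact hker ε hε t
      rw [hcg, ← intervalIntegral.integral_add_adjacent_intervals
        (hfPInt δ c hδ0 hδc.le hc1.le) (hfPInt c 1 hc0 hc1.le le_rfl)]
      congr 1
      -- integration by parts on [δ, c]
      have hIBP := intervalIntegral.integral_mul_deriv_eq_deriv_mul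
        (u := fun t => η₁⁻¹ * P ε t) (u' := fun t => η₁⁻¹ * Q ε t)
        (v := G) (v' := fun t => f t * η₁)
        (fun x _ => (hPd ε hε.ne' x).const_mul η₁⁻¹)
        (fun x hx => by
          rw [Set.uIcc_of_le hδc.le] at hx
          exact hG' x (lt_of_lt_of_le hδ0 hx.1) (lt_of_le_of_lt hx.2 (lt_trans hct ht₁)))
        (by
          apply ContinuousOn.intervalIntegrable
          exact (continuous_const.mul (hQcont ε hε.ne')).continuousOn)
        (hfηInt δ c hδ0 hδc.le hc1.le)
      have hcg2 : (∫ t in δ..c, f t * P ε t)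
          = ∫ t in δ..c, (η₁⁻¹ * P ε t) * (f t * η₁) := by
        apply intervalIntegral.integral_congr
        intro t _
        field_simp
      rw [hcg2, hIBP]
    -- limit of the right-hand side as δ → 0⁺
    have hlim : Tendsto (fun δ : ℝ =>
        (1 / (2 * (Real.pi : ℂ) * Complex.I)) *
          (((η₁⁻¹ * P ε c * G c - η₁⁻¹ * P ε δ * G δ
              - ∫ t in δ..c, (η₁⁻¹ * Q ε t) * G t)
            + ∫ t in c..(1:ℝ), f t * P ε t))) (𝓝[>] 0)
        (𝓝 ((1 / (2 * (Real.pi : ℂ) * Complex.I)) *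
          ((η₁⁻¹ * P ε c * G c - ∫ t in (0:ℝ)..c, (η₁⁻¹ * Q ε t) * G t)
            + ∫ t in c..(1:ℝ), f t * P ε t))) := by
      apply Tendsto.const_mul
      apply Tendsto.add _ tendsto_const_nhds
      have hterm2 : Tendsto (fun δ : ℝ => η₁⁻¹ * P ε δ * G δ) (𝓝[>] 0) (𝓝 0) := by
        have hPδ : Tendsto (fun δ : ℝ => η₁⁻¹ * P ε δ) (𝓝[>] 0) (𝓝 (η₁⁻¹ * P ε 0)) :=
          ((continuous_const.mul (hPcont ε hε.ne')).tendsto 0).mono_left nhdsWithin_le_nhds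
        have := hPδ.mul hGlim
        simpa using this
      -- the integral term
      set h : ℝ → ℂ := fun t => (η₁⁻¹ * Q ε t) * G t with hhdef
      have hhc : ContinuousOn h (Set.Icc 0 c) :=
        ((continuous_const.mul (hQcont ε hε.ne')).continuousOn).mul hGc
      obtain ⟨Mh, hMh⟩ := isCompact_Icc.exists_bound_of_continuousOn hhc
      have hMh0 : 0 ≤ Mh := le_trans (norm_nonneg _) (hMh 0 ⟨le_refl 0, hc0.le⟩)
      have hint0 : Tendsto (fun δ : ℝ => ∫ t in (0:ℝ)..δ, h t) (𝓝[>] 0) (𝓝 0) := by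
        apply squeeze_zero_norm'
        · filter_upwards [Ioo_mem_nhdsGT_of_mem (Set.mem_Ico.mpr ⟨le_refl (0:ℝ), hc0⟩)]
            with δ hδ
          have hb := intervalIntegral.norm_integral_le_of_norm_le_const
            (C := Mh) (f := h) (a := 0) (b := δ) ?_
          · calc ‖∫ t in (0:ℝ)..δ, h t‖ ≤ Mh * |δ - 0| := hb
              _ = Mh * δ := by rw [sub_zero, abs_of_pos hδ.1]
          · intro x hx
            rw [Set.uIoc_of_le hδ.1.le] at hx
            exact hMh x ⟨hx.1.le, le_trans hx.2 hδ.2.le⟩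
        · have : Tendsto (fun δ : ℝ => Mh * δ) (𝓝 0) (𝓝 (Mh * 0)) :=
            (continuous_const.mul continuous_id).tendsto 0
          rw [mul_zero] at this
          exact this.mono_left nhdsWithin_le_nhds
      have hsplitδ : ∀ᶠ δ : ℝ in 𝓝[>] 0,
          (∫ t in δ..c, h t) = (∫ t in (0:ℝ)..c, h t) - ∫ t in (0:ℝ)..δ, h t := by
        filter_upwards [Ioo_mem_nhdsGT_of_mem (Set.mem_Ico.mpr ⟨le_refl (0:ℝ), hc0⟩)]
          with δ hδ
        have h1 : IntervalIntegrable h volume 0 δ := by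
          apply ContinuousOn.intervalIntegrable
          rw [Set.uIcc_of_le hδ.1.le]
          exact hhc.mono (fun x hx => ⟨hx.1, le_trans hx.2 hδ.2.le⟩)
        have h2 : IntervalIntegrable h volume δ c := by
          apply ContinuousOn.intervalIntegrable
          rw [Set.uIcc_of_le hδ.2.le]
          exact hhc.mono (fun x hx => ⟨le_trans hδ.1.le hx.1, hx.2⟩)
        rw [← intervalIntegral.integral_add_adjacent_intervals h1 h2]
        abel
      have hintc : Tendsto (fun δ : ℝ => ∫ t in δ..c, h t) (𝓝[>] 0)
          (𝓝 (∫ t in (0:ℝ)..c, h t)) := by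
        have := (tendsto_const_nhds (x := ∫ t in (0:ℝ)..c, h t)
          (f := 𝓝[>] (0:ℝ))).sub hint0
        rw [sub_zero] at this
        exact this.congr' (hsplitδ.mono fun δ hδ => hδ.symm)
      have := (tendsto_const_nhds (x := η₁⁻¹ * P ε c * G c)
        (f := 𝓝[>] (0:ℝ))).sub hterm2 |>.sub hintc
      simpa using this
    exact tendsto_nhds_unique (hT.congr' hev) hlim
  -- limits of the three pieces as ε → 0⁺
  have hB1 : Tendsto (fun ε : ℝ => η₁⁻¹ * P ε c * G c) (𝓝[>] 0) (𝓝 0) := by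
    have hcne : (c - t₀) ≠ 0 := sub_ne_zero.mpr hct.ne
    have hreal : Tendsto (fun ε : ℝ => ε / ((c - t₀) ^ 2 + ε ^ 2)) (𝓝 0)
        (𝓝 ((0:ℝ) / ((c - t₀) ^ 2 + (0:ℝ) ^ 2))) := by
      apply Tendsto.div tendsto_id
      · have hcont : Continuous (fun ε : ℝ => (c - t₀) ^ 2 + ε ^ 2) := by fun_prop
        exact hcont.tendsto 0
      · simpa using pow_ne_zero 2 hcne
    rw [zero_div] at hreal
    have hC : Tendsto (fun ε : ℝ => η₁⁻¹ * P ε c * G c) (𝓝 0)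
        (𝓝 (η₁⁻¹ * ((2 * Complex.I) * ((0:ℝ) : ℂ)) * G c)) := by
      apply Tendsto.mul_const
      apply Tendsto.const_mul
      apply Tendsto.const_mul
      exact (Complex.continuous_ofReal.tendsto 0).comp hreal
    simp only [Complex.ofReal_zero, mul_zero, zero_mul] at hC
    exact hC.mono_left nhdsWithin_le_nhds
  have hB2 : Tendsto (fun ε : ℝ => ∫ t in (0:ℝ)..c, (η₁⁻¹ * Q ε t) * G t)
      (𝓝[>] 0) (𝓝 0) := by
    have htc : (0:ℝ) < t₀ - c := by linarith
    apply squeeze_zero_norm' (a := fun ε : ℝ => ‖η₁⁻¹‖ * (4 * ε / (t₀ - c) ^ 3) * MG * c)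
    · filter_upwards [self_mem_nhdsWithin] with ε (hε : (0:ℝ) < ε)
      have hbd : ∀ x ∈ Set.uIoc (0:ℝ) c,
          ‖(η₁⁻¹ * Q ε x) * G x‖ ≤ ‖η₁⁻¹‖ * (4 * ε / (t₀ - c) ^ 3) * MG := by
        intro x hx
        rw [Set.uIoc_of_le hc0.le] at hx
        have hxc : x ∈ Set.Icc (0:ℝ) c := ⟨hx.1.le, hx.2⟩
        have ha : t₀ - c ≤ t₀ - x := by linarith [hx.2]
        have hax : (0:ℝ) < t₀ - x := by linarith [hx.2]
        have hQbd : ‖Q ε x‖ ≤ 4 * ε / (t₀ - c) ^ 3 := by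
          have hd : (0:ℝ) < (x - t₀) ^ 2 + ε ^ 2 := by positivity
          have h1 : ‖Q ε x‖ = 2 * |(-(ε * (2 * (x - t₀))) / ((x - t₀) ^ 2 + ε ^ 2) ^ 2)| := by
            rw [hQdef]
            rw [norm_mul, Complex.norm_real, Real.norm_eq_abs]
            congr 1
            simp
          rw [h1]
          rw [abs_div, abs_of_pos (by positivity : (0:ℝ) < ((x - t₀) ^ 2 + ε ^ 2) ^ 2)]
          have hnum : |(-(ε * (2 * (x - t₀))))| = 2 * ε * (t₀ - x) := by
            rw [abs_of_nonneg]
            · ring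
            · nlinarith
          rw [hnum, mul_div_assoc', div_le_div_iff₀ (by positivity) (by positivity)]
          have h2 : (t₀ - x) ^ 4 ≤ ((x - t₀) ^ 2 + ε ^ 2) ^ 2 := by nlinarith [sq_nonneg ε]
          have h3 : (t₀ - c) ^ 3 ≤ (t₀ - x) ^ 3 := by
            apply pow_le_pow_left₀ htc.le ha
          nlinarith [mul_le_mul_of_nonneg_left h3
              (by positivity : (0:ℝ) ≤ ε * (t₀ - x)),
            mul_le_mul_of_nonneg_left h2 (by positivity : (0:ℝ) ≤ ε)]
        calc ‖(η₁⁻¹ * Q ε x) * G x‖ = ‖η₁⁻¹‖ * ‖Q ε x‖ * ‖G x‖ := by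
              rw [norm_mul, norm_mul]
          _ ≤ ‖η₁⁻¹‖ * (4 * ε / (t₀ - c) ^ 3) * MG := by
              apply mul_le_mul (mul_le_mul_of_nonneg_left hQbd (norm_nonneg _))
                (hMG x hxc) (norm_nonneg _) (by positivity)
      have := intervalIntegral.norm_integral_le_of_norm_le_const hbd
      calc ‖∫ t in (0:ℝ)..c, (η₁⁻¹ * Q ε t) * G t‖
          ≤ ‖η₁⁻¹‖ * (4 * ε / (t₀ - c) ^ 3) * MG * |c - 0| := this
        _ = ‖η₁⁻¹‖ * (4 * ε / (t₀ - c) ^ 3) * MG * c := by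
            rw [sub_zero, abs_of_pos hc0]
    · have hcont : Continuous (fun ε : ℝ => ‖η₁⁻¹‖ * (4 * ε / (t₀ - c) ^ 3) * MG * c) := by
        fun_prop
      have h1 := hcont.tendsto 0
      have h0 : ‖η₁⁻¹‖ * (4 * (0:ℝ) / (t₀ - c) ^ 3) * MG * c = 0 := by ring
      rw [h0] at h1
      exact h1.mono_left nhdsWithin_le_nhds
  have hB3 : Tendsto (fun ε : ℝ => ∫ t in c..(1:ℝ), f t * P ε t) (𝓝[>] 0)
      (𝓝 (2 * (Real.pi:ℂ) * Complex.I * f t₀)) := by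
    have hsplit : ∀ ε : ℝ, 0 < ε →
        (∫ t in c..(1:ℝ), f t * P ε t)
          = (2 * Complex.I) * (∫ t in c..(1:ℝ),
              (f t - f t₀) * ((ε / ((t - t₀) ^ 2 + ε ^ 2) : ℝ) : ℂ))
            + (f t₀ * (2 * Complex.I)) *
              ((∫ t in c..(1:ℝ), ε / ((t - t₀) ^ 2 + ε ^ 2) : ℝ) : ℂ) := by
      intro ε hε
      have hpcont := pois_cont ε t₀ hε.ne'
      have hi1 : IntervalIntegrable (fun t : ℝ =>
          (f t - f t₀) * ((ε / ((t - t₀) ^ 2 + ε ^ 2) : ℝ) : ℂ)) volume c 1 := by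
        apply ContinuousOn.intervalIntegrable
        rw [Set.uIcc_of_le hc1.le]
        exact ((hfcOn c 1 hc0 le_rfl).sub continuousOn_const).mul
          (Complex.continuous_ofReal.comp hpcont).continuousOn
      have hi2 : IntervalIntegrable (fun t : ℝ =>
          f t₀ * ((ε / ((t - t₀) ^ 2 + ε ^ 2) : ℝ) : ℂ)) volume c 1 := by
        apply ContinuousOn.intervalIntegrable
        exact (continuousOn_const.mul
          (Complex.continuous_ofReal.comp hpcont).continuousOn)
      have hcg : (∫ t in c..(1:ℝ), f t * P ε t)
          = ∫ t in c..(1:ℝ), ((2 * Complex.I) * ((f t - f t₀) * ((ε / ((t - t₀) ^ 2 + ε ^ 2) : ℝ) : ℂ))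
            + (f t₀ * (2 * Complex.I)) * ((ε / ((t - t₀) ^ 2 + ε ^ 2) : ℝ) : ℂ)) := by
        apply intervalIntegral.integral_congr
        intro t _
        rw [hPdef]
        ring
      have hi1' : IntervalIntegrable (fun t : ℝ =>
          (2 * Complex.I) * ((f t - f t₀) * ((ε / ((t - t₀) ^ 2 + ε ^ 2) : ℝ) : ℂ)))
          volume c 1 := hi1.const_mul _
      have hi2' : IntervalIntegrable (fun t : ℝ =>
          (f t₀ * (2 * Complex.I)) * ((ε / ((t - t₀) ^ 2 + ε ^ 2) : ℝ) : ℂ)) volume c 1 := by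
        apply ContinuousOn.intervalIntegrable
        exact (continuousOn_const.mul
          (Complex.continuous_ofReal.comp hpcont).continuousOn)
      rw [hcg, intervalIntegral.integral_add hi1' hi2',
        intervalIntegral.integral_const_mul, intervalIntegral.integral_const_mul,
        intervalIntegral.integral_ofReal]
    have happrox := poisson_approx c t₀ hct ht₁ f (hfcOn c 1 hc0 le_rfl)
      (hfc t₀ ht₀ ht₁.le)
    have hpois := poisson_tendsto c t₀ hct ht₁
    have hpoisC : Tendsto (fun ε : ℝ =>
        ((∫ t in c..(1:ℝ), ε / ((t - t₀) ^ 2 + ε ^ 2) : ℝ) : ℂ)) (𝓝[>] 0)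
        (𝓝 ((Real.pi : ℝ) : ℂ)) :=
      (Complex.continuous_ofReal.tendsto _).comp hpois
    have hcomb := (happrox.const_mul (2 * Complex.I)).add
      (hpoisC.const_mul (f t₀ * (2 * Complex.I)))
    rw [mul_zero, zero_add] at hcomb
    have hval : (f t₀ * (2 * Complex.I)) * ((Real.pi : ℝ) : ℂ)
        = 2 * (Real.pi:ℂ) * Complex.I * f t₀ := by push_cast; ring
    rw [hval] at hcomb
    apply hcomb.congr'
    filter_upwards [self_mem_nhdsWithin] with ε (hε : (0:ℝ) < ε)
    exact (hsplit ε hε).symm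
  -- final combination
  have hBtot : Tendsto (fun ε : ℝ =>
      (1 / (2 * (Real.pi : ℂ) * Complex.I)) *
        ((η₁⁻¹ * P ε c * G c - ∫ t in (0:ℝ)..c, (η₁⁻¹ * Q ε t) * G t)
          + ∫ t in c..(1:ℝ), f t * P ε t)) (𝓝[>] 0)
      (𝓝 ((1 / (2 * (Real.pi : ℂ) * Complex.I)) *
        (((0:ℂ) - 0) + 2 * (Real.pi:ℂ) * Complex.I * f t₀))) :=
    Tendsto.const_mul _ ((hB1.sub hB2).add hB3)
  have hfinal : (1 / (2 * (Real.pi : ℂ) * Complex.I)) *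
      (((0:ℂ) - 0) + 2 * (Real.pi:ℂ) * Complex.I * f t₀) = f t₀ := by
    have hπ : (Real.pi : ℂ) ≠ 0 := Complex.ofReal_ne_zero.mpr Real.pi_ne_zero
    field_simp
    ring
  rw [hfinal] at hBtot
  apply hBtot.congr'
  filter_upwards [self_mem_nhdsWithin] with ε (hε : (0:ℝ) < ε)
  exact (key ε hε).symm
end

section
/- Let a, b ∈ ℝ with b − a > 2π, let c ∈ ℝ, and let F be holomorphic on the half-strip S = {w ∈ ℂ : Re w < c, a < Im w < b}. Assume that for all a', b' with a < a' < b' < b, sup{ |F(w) e^{w}| : Re w = σ, a' ≤ Im w ≤ b' } → 0 as σ → −∞. Then for every w₀ ∈ S with a < Im w₀ and Im w₀ + 2π < b, the improper integral ∫_{−∞}^0 ( F(w₀ + t) − F(w₀ + t + 2πi) ) e^{w₀ + t} dt converges, i.e. lim_{T→−∞} ∫_T^0 ( F(w₀ + t) − F(w₀ + t + 2πi) ) e^{w₀ + t} dt exists in ℂ. -/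
open MeasureTheory Topology Filter

/-- var maps small microfunctions to minors (Proposition 6.3, Part I, in the
logarithmic model w = log ζ): for F holomorphic in a half-strip with
F(w)e^w → 0 uniformly on substrips as Re w → −∞, the primitive of the
variation F(w) − F(w + 2πi) against e^w converges at −∞. -/
theorem stmt_14 (a b c : ℝ) (hab : 2 * Real.pi < b - a)
    (S : Set ℂ) (hS : S = {w : ℂ | w.re < c ∧ a < w.im ∧ w.im < b})
    (F : ℂ → ℂ) (hF : DifferentiableOn ℂ F S)
    (hdecay : ∀ a' b' : ℝ, a < a' → a' < b' → b' < b →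
      ∀ ε > (0:ℝ), ∃ σ₀ : ℝ, ∀ σ ≤ σ₀, ∀ w : ℂ, w.re = σ → a' ≤ w.im → w.im ≤ b' →
        ‖F w * Complex.exp w‖ ≤ ε) :
    ∀ w₀ ∈ S, a < w₀.im → w₀.im + 2 * Real.pi < b →
      ∃ L : ℂ, Tendsto (fun T : ℝ =>
          ∫ t in T..0, (F (w₀ + (t : ℂ)) - F (w₀ + (t : ℂ) + 2 * (Real.pi : ℂ) * Complex.I)) *
            Complex.exp (w₀ + (t : ℂ)))
        atBot (𝓝 L) := by
  intro w₀ hw₀ ha hb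
  have pi_pos := Real.pi_pos
  rw [hS] at hw₀
  obtain ⟨hw₀c, hw₀a, hw₀b⟩ := hw₀
  set f : ℂ → ℂ := fun w => F w * Complex.exp w with hf
  -- vertical edge integral at real part w₀.re + T
  set vert : ℝ → ℂ := fun T =>
    Complex.I • ∫ y in w₀.im..(w₀.im + 2 * Real.pi), f ((w₀.re + T : ℝ) + (y : ℂ) * Complex.I)
    with hvert
  -- Key identity via Cauchy's rectangle theorem
  have key : ∀ T : ℝ, T ≤ 0 →
      (∫ t in T..0, (F (w₀ + (t : ℂ)) - F (w₀ + (t : ℂ) + 2 * (Real.pi : ℂ) * Complex.I)) *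
        Complex.exp (w₀ + (t : ℂ))) = vert T - vert 0 := by
    intro T hT
    have hdiff : DifferentiableOn ℂ f
        (Set.uIcc (w₀.re + T) w₀.re ×ℂ Set.uIcc w₀.im (w₀.im + 2 * Real.pi)) := by
      apply (hF.mul (Complex.differentiable_exp.differentiableOn)).mono
      intro u hu
      rw [Complex.mem_reProdIm] at hu
      rw [Set.uIcc_of_le (by linarith), Set.uIcc_of_le (by linarith)] at hu
      obtain ⟨⟨h1, h2⟩, h3, h4⟩ := hu
      rw [hS]
      exact ⟨lt_of_le_of_lt h2 hw₀c, lt_of_lt_of_le hw₀a h3, lt_of_le_of_lt h4 hb⟩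
    have cauchy := Complex.integral_boundary_rect_eq_zero_of_differentiableOn f
      ⟨w₀.re + T, w₀.im⟩ ⟨w₀.re, w₀.im + 2 * Real.pi⟩ (by simpa using hdiff)
    simp only [Complex.add_re, Complex.add_im] at cauchy
    -- rewrite horizontal integrals by translation
    have hbot : (∫ x : ℝ in (w₀.re + T)..w₀.re, f ((x : ℂ) + (w₀.im : ℂ) * Complex.I)) =
        ∫ t in T..0, f (w₀ + (t : ℂ)) := by
      have h1 := intervalIntegral.integral_comp_add_right
        (a := T) (b := 0) (fun x : ℝ => f ((x : ℂ) + (w₀.im : ℂ) * Complex.I)) w₀.re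
      simp only [zero_add] at h1
      rw [show w₀.re + T = T + w₀.re by ring, ← h1]
      refine intervalIntegral.integral_congr fun t _ => ?_
      congr 1
      rw [Complex.ext_iff]
      constructor <;> simp <;> ring
    have htop : (∫ x : ℝ in (w₀.re + T)..w₀.re, f ((x : ℂ) + ((w₀.im + 2 * Real.pi : ℝ) : ℂ) * Complex.I)) =
        ∫ t in T..0, f (w₀ + (t : ℂ) + 2 * (Real.pi : ℂ) * Complex.I) := by
      have h1 := intervalIntegral.integral_comp_add_right
        (a := T) (b := 0) (fun x : ℝ => f ((x : ℂ) + ((w₀.im + 2 * Real.pi : ℝ) : ℂ) * Complex.I)) w₀.re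
      simp only [zero_add] at h1
      rw [show w₀.re + T = T + w₀.re by ring, ← h1]
      refine intervalIntegral.integral_congr fun t _ => ?_
      congr 1
      rw [Complex.ext_iff]
      constructor <;> simp <;> ring
    have hexp : ∀ t : ℝ, f (w₀ + (t : ℂ) + 2 * (Real.pi : ℂ) * Complex.I) =
        F (w₀ + (t : ℂ) + 2 * (Real.pi : ℂ) * Complex.I) * Complex.exp (w₀ + (t : ℂ)) := by
      intro t
      simp only [hf]
      rw [Complex.exp_add, Complex.exp_two_pi_mul_I, mul_one]
    have hsplit : (∫ t in T..0, (F (w₀ + (t : ℂ)) -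
          F (w₀ + (t : ℂ) + 2 * (Real.pi : ℂ) * Complex.I)) * Complex.exp (w₀ + (t : ℂ))) =
        (∫ t in T..0, f (w₀ + (t : ℂ))) -
        ∫ t in T..0, f (w₀ + (t : ℂ) + 2 * (Real.pi : ℂ) * Complex.I) := by
      rw [← intervalIntegral.integral_sub]
      · refine intervalIntegral.integral_congr fun t _ => ?_
        rw [hexp t]
        ring
      · -- integrability of f (w₀ + t) on [T,0]
        apply ContinuousOn.intervalIntegrable
        apply (hdiff.continuousOn.comp (by fun_prop) ?_)
        intro t ht
        rw [Set.uIcc_of_le hT] at ht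
        rw [Complex.mem_reProdIm]
        constructor
        · simp only [Complex.add_re, Complex.ofReal_re]
          rw [Set.uIcc_of_le (by linarith)]
          exact ⟨by linarith [ht.1], by linarith [ht.2]⟩
        · simp only [Complex.add_im, Complex.ofReal_im, add_zero]
          rw [Set.uIcc_of_le (by linarith)]
          exact ⟨le_refl _, by linarith⟩
      · apply ContinuousOn.intervalIntegrable
        apply (hdiff.continuousOn.comp (by fun_prop) ?_)
        intro t ht
        rw [Set.uIcc_of_le hT] at ht
        rw [Complex.mem_reProdIm]
        constructor
        · simp only [Complex.add_re, Complex.ofReal_re, Complex.mul_re, Complex.I_re,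
            Complex.I_im]
          rw [Set.uIcc_of_le (by linarith)]
          constructor
          · have : (2 * (Real.pi : ℂ) * Complex.I).re = 0 := by simp
            simp [this]
            linarith [ht.1]
          · have : (2 * (Real.pi : ℂ) * Complex.I).re = 0 := by simp
            simp [this]
            linarith [ht.2]
        · have : (2 * (Real.pi : ℂ) * Complex.I).im = 2 * Real.pi := by simp
          simp only [Complex.add_im, Complex.ofReal_im, add_zero, this]
          rw [Set.uIcc_of_le (by linarith)]
          exact ⟨by linarith, le_refl _⟩
    rw [hsplit, ← hbot, ← htop]
    have : vert 0 = Complex.I • ∫ y in w₀.im..(w₀.im + 2 * Real.pi),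
        f ((w₀.re : ℂ) + (y : ℂ) * Complex.I) := by
      simp [hvert]
    rw [this, hvert]
    simp only [Complex.ofReal_add] at cauchy ⊢
    linear_combination cauchy
  -- the vertical integral at T tends to 0
  have hvert0 : Tendsto vert atBot (𝓝 0) := by
    rw [NormedAddCommGroup.tendsto_nhds_zero]
    intro ε hε
    set ε' := ε / (2 * (2 * Real.pi + 1)) with hε'
    have hε'pos : 0 < ε' := by positivity
    obtain ⟨σ₀, hσ₀⟩ := hdecay w₀.im (w₀.im + 2 * Real.pi) ha (by linarith) hb ε' hε'pos
    rw [eventually_atBot]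
    refine ⟨σ₀ - w₀.re, fun T hT => ?_⟩
    have hnorm : ‖vert T‖ ≤ ε' * |w₀.im + 2 * Real.pi - w₀.im| := by
      rw [hvert]
      simp only [norm_smul, Complex.norm_I, one_mul]
      apply intervalIntegral.norm_integral_le_of_norm_le_const
      intro y hy
      rw [Set.uIoc_of_le (by linarith)] at hy
      have := hσ₀ (w₀.re + T) (by linarith)
        (((w₀.re + T : ℝ) : ℂ) + (y : ℂ) * Complex.I) (by simp) (by simp; linarith [hy.1])
        (by simp; linarith [hy.2])
      exact this
    calc ‖vert T‖ ≤ ε' * |w₀.im + 2 * Real.pi - w₀.im| := hnorm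
      _ = ε' * (2 * Real.pi) := by rw [show w₀.im + 2 * Real.pi - w₀.im = 2 * Real.pi by ring,
            abs_of_pos (by linarith)]
      _ < ε := by
          rw [hε']
          rw [div_mul_eq_mul_div, div_lt_iff₀ (by positivity)]
          nlinarith
  refine ⟨0 - vert 0, ?_⟩
  have := (hvert0.sub (tendsto_const_nhds (x := vert 0)))
  refine Tendsto.congr' ?_ this
  rw [EventuallyEq, eventually_atBot]
  exact ⟨0, fun T hT => (key T hT).symm⟩
end

section
/- Let r > 0, n ≥ 1, and let f₁, …, f_n : [0, r] → ℂ be continuous functions. Let F_i(t) = ∫_0^t f_i(s) ds, define the convolution of two continuous functions on [0, r] by (u * v)(t) = ∫_0^t u(τ) v(t − τ) dτ, let g = f₁ * f₂ * ⋯ * f_n, and let g^{(−n−1)} be obtained from g by integrating from 0 iteratively n + 1 times (g^{(−1)}(t) = ∫_0^t g(s) ds and g^{(−k−1)}(t) = ∫_0^t g^{(−k)}(s) ds). Then for every t ∈ [0, r]: g^{(−n−1)}(t) = ∫_{Δ_n(t)} F₁(s₁) F₂(s₂) ⋯ F_n(s_n) ds₁ ⋯ ds_n, where Δ_n(t) =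 {s ∈ ℝⁿ : s_i ≥ 0 for all i, s₁ + ⋯ + s_n ≤ t}; consequently |g^{(−n−1)}(t)| ≤ (max_i sup_{s ∈ [0,t]} |F_i(s)|)ⁿ · tⁿ / n!. -/
open MeasureTheory Set

/-- Convolution of two functions on `[0, r]`: `(u * v)(t) = ∫_0^t u(τ) v(t−τ) dτ`. -/
noncomputable def convOn (u v : ℝ → ℂ) : ℝ → ℂ :=
  fun t => ∫ τ in (0:ℝ)..t, u τ * v (t - τ)

/-- Iterated convolution `f₁ * f₂ * ⋯ * f_n` of a list of functions
(the value on the empty list is junk and unused for `n ≥ 1`). -/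
noncomputable def iterConv : List (ℝ → ℂ) → (ℝ → ℂ)
  | [] => fun _ => 1
  | [u] => u
  | u :: v :: rest => convOn u (iterConv (v :: rest))

/-- `k`-fold iterated integration from `0`:
`iterInt 0 u = u`, `iterInt (k+1) u t = ∫_0^t (iterInt k u)(s) ds`. -/
noncomputable def iterInt : ℕ → (ℝ → ℂ) → (ℝ → ℂ)
  | 0, u => u
  | k + 1, u => fun t => ∫ s in (0:ℝ)..t, iterInt k u s


def splx (n : ℕ) (t : ℝ) : Set (Fin n → ℝ) := {s | (∀ i, 0 ≤ s i) ∧ ∑ i, s i ≤ t}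

lemma isClosed_splx (n : ℕ) (t : ℝ) : IsClosed (splx n t) := by
  have : splx n t = (⋂ i, {s : Fin n → ℝ | 0 ≤ s i}) ∩ {s : Fin n → ℝ | ∑ i, s i ≤ t} := by
    ext s; simp [splx, Set.mem_iInter]
  rw [this]
  exact IsClosed.inter (isClosed_iInter fun i => isClosed_le continuous_const (continuous_apply i))
    (isClosed_le (continuous_finset_sum _ fun i _ => continuous_apply i) continuous_const)

lemma isCompact_splx (n : ℕ) (t : ℝ) : IsCompact (splx n t) := by
  refine IsCompact.of_isClosed_subset (isCompact_Icc (a := (0 : Fin n → ℝ))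
    (b := fun _ => max t 0)) (isClosed_splx n t) ?_
  rintro s ⟨h0, hs⟩
  refine ⟨fun i => h0 i, fun i => le_max_of_le_left (le_trans ?_ hs)⟩
  exact Finset.single_le_sum (fun j _ => h0 j) (Finset.mem_univ i)

lemma splx_empty {n : ℕ} {t : ℝ} (ht : t < 0) : splx n t = ∅ := by
  ext s
  simp only [splx, Set.mem_setOf_eq, Set.mem_empty_iff_false, iff_false]
  rintro ⟨h0, hs⟩
  exact absurd (le_trans (Finset.sum_nonneg fun i _ => h0 i) hs) (not_le.mpr ht)

lemma measurableSet_splx (n : ℕ) (t : ℝ) : MeasurableSet (splx n t) :=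
  (isClosed_splx n t).measurableSet

/-- Slicing off the first coordinate of a simplex integral. -/
lemma slice1 (m : ℕ) {t : ℝ} (ht : 0 ≤ t) (φ : Fin (m+1) → ℝ → ℂ)
    (hφ : ∀ i, Continuous (φ i)) :
    (∫ s in splx (m+1) t, ∏ i, φ i (s i)) =
      ∫ x in (0:ℝ)..t, φ 0 x * ∫ y in splx m (t - x), ∏ i, φ i.succ (y i) := by
  set G : (Fin (m+1) → ℝ) → ℂ := fun s => ∏ i, φ i (s i) with hGdef
  have hGcont : Continuous G := continuous_finset_prod _ fun i _ => (hφ i).comp (continuous_apply i)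
  set A := splx (m+1) t with hA
  set e := MeasurableEquiv.piFinSuccAbove (fun _ : Fin (m+1) => ℝ) 0 with he
  have mps : MeasurePreserving e.symm volume volume :=
    (volume_preserving_piFinSuccAbove (fun _ : Fin (m+1) => ℝ) 0).symm
  have hsymm : ∀ (x : ℝ) (y : Fin m → ℝ), e.symm (x, y) = Fin.cons x y := by
    intro x y
    simp [he, MeasurableEquiv.piFinSuccAbove, Fin.insertNthEquiv, Fin.insertNth_zero]
  -- integrability
  have hGind : Integrable (A.indicator G) := by
    refine IntegrableOn.integrable_indicator ?_ (measurableSet_splx _ t)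
    exact hGcont.continuousOn.integrableOn_compact (isCompact_splx _ t)
  have hcomp : Integrable (fun z : ℝ × (Fin m → ℝ) => A.indicator G (e.symm z)) volume :=
    ((mps.integrable_comp_emb e.symm.measurableEmbedding).mpr hGind)
  have hmem : ∀ (x : ℝ) (y : Fin m → ℝ),
      (Fin.cons x y : Fin (m+1) → ℝ) ∈ A ↔ (0 ≤ x ∧ y ∈ splx m (t - x)) := by
    intro x y
    simp only [hA, splx, Set.mem_setOf_eq, Fin.forall_fin_succ, Fin.cons_zero, Fin.cons_succ,
      Fin.sum_univ_succ]
    constructor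
    · rintro ⟨⟨h0, hy⟩, hs⟩; exact ⟨h0, hy, by linarith⟩
    · rintro ⟨h0, hy, hs⟩; exact ⟨⟨h0, hy⟩, by linarith⟩
  have hGcons : ∀ (x : ℝ) (y : Fin m → ℝ),
      G (Fin.cons x y) = φ 0 x * ∏ i, φ i.succ (y i) := by
    intro x y
    simp only [hGdef, Fin.prod_univ_succ, Fin.cons_zero, Fin.cons_succ]
  calc
    ∫ s in A, G s = ∫ z in e.symm ⁻¹' A, G (e.symm z) :=
      (mps.setIntegral_preimage_emb e.symm.measurableEmbedding G A).symm
    _ = ∫ z : ℝ × (Fin m → ℝ), (e.symm ⁻¹' A).indicator (fun z => G (e.symm z)) z := by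
      rw [integral_indicator (e.symm.measurable (measurableSet_splx _ t))]
    _ = ∫ z : ℝ × (Fin m → ℝ), A.indicator G (e.symm z) := by
      refine integral_congr_ae (Filter.Eventually.of_forall fun z => ?_)
      by_cases h : e.symm z ∈ A <;> simp [Set.indicator_apply, h, Set.mem_preimage]
    _ = ∫ x : ℝ, ∫ y : Fin m → ℝ, A.indicator G (e.symm (x, y)) := by
      rw [MeasureTheory.Measure.volume_eq_prod] at hcomp ⊢
      exact MeasureTheory.integral_prod _ hcomp
    _ = ∫ x : ℝ, (Set.Icc (0:ℝ) t).indicator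
          (fun x => φ 0 x * ∫ y in splx m (t - x), ∏ i, φ i.succ (y i)) x := by
      congr 1; funext x
      by_cases hx : 0 ≤ x
      · have : ∀ y : Fin m → ℝ, A.indicator G (e.symm (x, y)) =
            (splx m (t - x)).indicator (fun y => φ 0 x * ∏ i, φ i.succ (y i)) y := by
          intro y
          rw [hsymm]
          by_cases hy : y ∈ splx m (t - x)
          · rw [Set.indicator_of_mem ((hmem x y).mpr ⟨hx, hy⟩), Set.indicator_of_mem hy,
              hGcons]
          · rw [Set.indicator_of_notMem (fun hc => hy ((hmem x y).mp hc).2),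
              Set.indicator_of_notMem hy]
        simp_rw [this]
        rw [integral_indicator (measurableSet_splx _ _), MeasureTheory.integral_const_mul]
        by_cases hxt : x ≤ t
        · rw [Set.indicator_of_mem (Set.mem_Icc.mpr ⟨hx, hxt⟩)]
        · rw [Set.indicator_of_notMem (fun hc => hxt hc.2), splx_empty (by linarith),
            Measure.restrict_empty, integral_zero_measure, mul_zero]
      · have : ∀ y : Fin m → ℝ, A.indicator G (e.symm (x, y)) = 0 := by
          intro y
          rw [hsymm, Set.indicator_of_notMem (fun hc => hx ((hmem x y).mp hc).1)]
        simp_rw [this]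
        rw [integral_zero, Set.indicator_of_notMem (fun hc => hx hc.1)]
    _ = ∫ x in Set.Icc (0:ℝ) t, φ 0 x * ∫ y in splx m (t - x), ∏ i, φ i.succ (y i) :=
      integral_indicator measurableSet_Icc
    _ = ∫ x in (0:ℝ)..t, φ 0 x * ∫ y in splx m (t - x), ∏ i, φ i.succ (y i) := by
      rw [integral_Icc_eq_integral_Ioc, intervalIntegral.integral_of_le ht]

lemma iterInt_one_eq (w : ℝ → ℂ) (t : ℝ) : iterInt 1 w t = ∫ x in (0:ℝ)..t, w x := rfl

lemma continuous_iterInt {w : ℝ → ℂ} (k : ℕ) (hw : Continuous w) : Continuous (iterInt k w) := by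
  induction k with
  | zero => exact hw
  | succ k ih =>
    show Continuous fun t => ∫ s in (0:ℝ)..t, iterInt k w s
    exact intervalIntegral.continuous_parametric_intervalIntegral_of_continuous
      (f := fun (_ : ℝ) s => iterInt k w s) (ih.comp continuous_snd) continuous_id

lemma continuous_convOn {u v : ℝ → ℂ} (hu : Continuous u) (hv : Continuous v) :
    Continuous (convOn u v) := by
  show Continuous fun t => ∫ τ in (0:ℝ)..t, u τ * v (t - τ)
  exact intervalIntegral.continuous_parametric_intervalIntegral_of_continuous
    (f := fun (t : ℝ) τ => u τ * v (t - τ))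
    ((hu.comp continuous_snd).mul (hv.comp (continuous_fst.sub continuous_snd))) continuous_id

lemma convOn_comm (u v : ℝ → ℂ) (t : ℝ) : convOn u v t = convOn v u t := by
  unfold convOn
  have h := intervalIntegral.integral_comp_sub_left (a := (0:ℝ)) (b := t)
    (fun τ => u τ * v (t - τ)) t
  simp only [sub_self, sub_zero, sub_sub_cancel] at h
  rw [← h]
  exact intervalIntegral.integral_congr fun x _ => mul_comm _ _

/-- Fubini on the triangle: the primitive of a convolution is the convolution with
the primitive. -/
lemma TRI {u v : ℝ → ℂ} (hu : Continuous u) (hv : Continuous v) {t : ℝ} (ht : 0 ≤ t) :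
    (∫ s in (0:ℝ)..t, convOn u v s) = convOn u (iterInt 1 v) t := by
  set W : ℝ × ℝ → ℂ := fun p => u p.2 * v (p.1 - p.2) with hW
  set D : Set (ℝ × ℝ) := {p | 0 < p.2 ∧ p.2 ≤ p.1 ∧ p.1 ≤ t} with hD
  have hWcont : Continuous W :=
    (hu.comp continuous_snd).mul (hv.comp (continuous_fst.sub continuous_snd))
  have hDmeas : MeasurableSet D := by
    have : D = {p : ℝ × ℝ | 0 < p.2} ∩ ({p | p.2 ≤ p.1} ∩ {p | p.1 ≤ t}) := by
      ext p; simp [hD, and_assoc]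
    rw [this]
    exact (measurableSet_lt measurable_const measurable_snd).inter
      ((measurableSet_le measurable_snd measurable_fst).inter
        (measurableSet_le measurable_fst measurable_const))
  have hDsub : D ⊆ Set.Icc ((0:ℝ), (0:ℝ)) (t, t) := by
    rintro ⟨a, b⟩ ⟨h1, h2, h3⟩
    dsimp only at h1 h2 h3
    simp only [Set.mem_Icc, Prod.mk_le_mk]
    exact ⟨⟨by linarith, by linarith⟩, by linarith, by linarith⟩
  have hint : Integrable (D.indicator W) ((volume : Measure ℝ).prod volume) := by
    rw [← MeasureTheory.Measure.volume_eq_prod]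
    exact ((hWcont.continuousOn.integrableOn_compact isCompact_Icc).mono_set
      hDsub).integrable_indicator hDmeas
  have huncurry : Integrable (Function.uncurry fun s τ => D.indicator W (s, τ))
      ((volume : Measure ℝ).prod volume) := by
    have : (Function.uncurry fun s τ => D.indicator W (s, τ)) = D.indicator W := by
      funext p; cases p; rfl
    rw [this]; exact hint
  calc
    (∫ s in (0:ℝ)..t, convOn u v s)
        = ∫ s in Set.Ioc (0:ℝ) t, convOn u v s := intervalIntegral.integral_of_le ht
    _ = ∫ s in Set.Ioc (0:ℝ) t, ∫ τ : ℝ, (Set.Ioc (0:ℝ) s).indicator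
          (fun τ => u τ * v (s - τ)) τ := by
      refine setIntegral_congr_fun measurableSet_Ioc fun s hs => ?_
      show convOn u v s = _
      unfold convOn
      rw [intervalIntegral.integral_of_le hs.1.le, integral_indicator measurableSet_Ioc]
    _ = ∫ s : ℝ, (Set.Ioc (0:ℝ) t).indicator (fun s => ∫ τ : ℝ, (Set.Ioc (0:ℝ) s).indicator
          (fun τ => u τ * v (s - τ)) τ) s := (integral_indicator measurableSet_Ioc).symm
    _ = ∫ s : ℝ, ∫ τ : ℝ, D.indicator W (s, τ) := by
      refine integral_congr_ae (Filter.Eventually.of_forall fun s => ?_)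
      by_cases hs : s ∈ Set.Ioc (0:ℝ) t
      · rw [Set.indicator_of_mem hs]
        refine integral_congr_ae (Filter.Eventually.of_forall fun τ => ?_)
        show (Set.Ioc (0:ℝ) s).indicator (fun τ => u τ * v (s - τ)) τ = D.indicator W (s, τ)
        by_cases hτ : τ ∈ Set.Ioc (0:ℝ) s
        · rw [Set.indicator_of_mem hτ, Set.indicator_of_mem (show (s, τ) ∈ D from ⟨hτ.1, hτ.2, hs.2⟩)]
        · rw [Set.indicator_of_notMem hτ, Set.indicator_of_notMem]
          rintro ⟨h1, h2, h3⟩; exact hτ ⟨h1, h2⟩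
      · rw [Set.indicator_of_notMem hs]
        have : ∀ τ : ℝ, D.indicator W (s, τ) = 0 := by
          intro τ
          refine Set.indicator_of_notMem ?_ _
          rintro ⟨h1, h2, h3⟩; exact hs ⟨lt_of_lt_of_le h1 h2, h3⟩
        simp_rw [this, integral_zero]
    _ = ∫ τ : ℝ, ∫ s : ℝ, D.indicator W (s, τ) := integral_integral_swap huncurry
    _ = ∫ τ : ℝ, (Set.Ioc (0:ℝ) t).indicator (fun τ => u τ * iterInt 1 v (t - τ)) τ := by
      refine integral_congr_ae (Filter.Eventually.of_forall fun τ => ?_)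
      by_cases hτ : τ ∈ Set.Ioc (0:ℝ) t
      · have : ∀ s : ℝ, D.indicator W (s, τ) =
            (Set.Icc τ t).indicator (fun s => u τ * v (s - τ)) s := by
          intro s
          by_cases hs : s ∈ Set.Icc τ t
          · rw [Set.indicator_of_mem hs,
              Set.indicator_of_mem (show (s, τ) ∈ D from ⟨hτ.1, hs.1, hs.2⟩)]
          · rw [Set.indicator_of_notMem hs, Set.indicator_of_notMem]
            rintro ⟨h1, h2, h3⟩; exact hs ⟨h2, h3⟩
        simp_rw [this]
        rw [integral_indicator measurableSet_Icc, Set.indicator_of_mem hτ,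
          integral_Icc_eq_integral_Ioc, ← intervalIntegral.integral_of_le hτ.2,
          intervalIntegral.integral_const_mul]
        congr 1
        rw [intervalIntegral.integral_comp_sub_right (fun x => v x) τ, sub_self, iterInt_one_eq _ _]
      · rw [Set.indicator_of_notMem hτ]
        have : ∀ s : ℝ, D.indicator W (s, τ) = 0 := by
          intro s
          refine Set.indicator_of_notMem ?_ _
          rintro ⟨h1, h2, h3⟩; exact hτ ⟨h1, le_trans h2 h3⟩
        simp_rw [this, integral_zero]
    _ = ∫ τ in Set.Ioc (0:ℝ) t, u τ * iterInt 1 v (t - τ) := integral_indicator measurableSet_Ioc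
    _ = convOn u (iterInt 1 v) t := (intervalIntegral.integral_of_le ht).symm

lemma iterConv_cons (u : ℝ → ℂ) {l : List (ℝ → ℂ)} (hl : l ≠ []) :
    iterConv (u :: l) = convOn u (iterConv l) := by
  cases l with
  | nil => exact absurd rfl hl
  | cons v rest => rfl

lemma continuous_iterConv : ∀ {l : List (ℝ → ℂ)}, (∀ w ∈ l, Continuous w) →
    Continuous (iterConv l)
  | [], _ => continuous_const
  | [u], h => h u (by simp)
  | u :: v :: rest, h =>
    continuous_convOn (h u (by simp))
      (continuous_iterConv fun w hw => h w (List.mem_cons_of_mem u hw))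

lemma convOn_congr {u u' v v' : ℝ → ℂ} {c : ℝ} (hu : Set.EqOn u u' (Set.Icc 0 c))
    (hv : Set.EqOn v v' (Set.Icc 0 c)) {t : ℝ} (ht : t ∈ Set.Icc 0 c) :
    convOn u v t = convOn u' v' t := by
  unfold convOn
  refine intervalIntegral.integral_congr fun τ hτ => ?_
  rw [Set.uIcc_of_le ht.1] at hτ
  obtain ⟨h0, h1⟩ := hτ
  rw [hu ⟨h0, le_trans h1 ht.2⟩, hv ⟨by linarith, by linarith [ht.2]⟩]

lemma iterConv_ofFn_congr : ∀ (n : ℕ) (f f' : Fin n → ℝ → ℂ) (c : ℝ),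
    (∀ i, Set.EqOn (f i) (f' i) (Set.Icc 0 c)) →
    ∀ t ∈ Set.Icc (0:ℝ) c, iterConv (List.ofFn f) t = iterConv (List.ofFn f') t := by
  intro n
  induction n with
  | zero => intro f f' c h t ht; simp [List.ofFn_zero]
  | succ k ih =>
    intro f f' c h t ht
    rw [List.ofFn_succ, List.ofFn_succ]
    cases k with
    | zero =>
      simp only [List.ofFn_zero]
      exact h 0 ht
    | succ m =>
      have hne : List.ofFn (fun i : Fin (m+1) => f i.succ) ≠ [] := by
        rw [List.ofFn_succ]; exact List.cons_ne_nil _ _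
      have hne' : List.ofFn (fun i : Fin (m+1) => f' i.succ) ≠ [] := by
        rw [List.ofFn_succ]; exact List.cons_ne_nil _ _
      rw [iterConv_cons _ hne, iterConv_cons _ hne']
      exact convOn_congr (h 0)
        (fun s hs => ih (fun i => f i.succ) (fun i => f' i.succ) c (fun i => h i.succ) s hs) ht

lemma iterInt_congr : ∀ (k : ℕ) {w w' : ℝ → ℂ} {c : ℝ}, Set.EqOn w w' (Set.Icc 0 c) →
    ∀ t ∈ Set.Icc (0:ℝ) c, iterInt k w t = iterInt k w' t := by
  intro k
  induction k with
  | zero => intro w w' c h t ht; exact h ht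
  | succ k ih =>
    intro w w' c h t ht
    show (∫ s in (0:ℝ)..t, iterInt k w s) = ∫ s in (0:ℝ)..t, iterInt k w' s
    refine intervalIntegral.integral_congr fun s hs => ?_
    rw [Set.uIcc_of_le ht.1] at hs
    exact ih h s ⟨hs.1, le_trans hs.2 ht.2⟩

lemma iterInt_succ_comm : ∀ (k : ℕ) (w : ℝ → ℂ), iterInt (k+1) w = iterInt k (iterInt 1 w) := by
  intro k
  induction k with
  | zero => intro w; rfl
  | succ k ih =>
    intro w
    show (fun t => ∫ s in (0:ℝ)..t, iterInt (k+1) w s) = fun t => ∫ s in (0:ℝ)..t, iterInt k (iterInt 1 w) s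
    rw [ih]

lemma iterInt_one_comp (k : ℕ) (b : ℝ → ℂ) : iterInt 1 (iterInt k b) = iterInt (k+1) b := rfl

lemma iterInt_convOn : ∀ (k : ℕ) {a b : ℝ → ℂ}, Continuous a → Continuous b →
    ∀ t, 0 ≤ t → iterInt k (convOn a b) t = convOn a (iterInt k b) t := by
  intro k
  induction k with
  | zero => intro a b _ _ t _; rfl
  | succ k ih =>
    intro a b ha hb t ht
    have : iterInt (k+1) (convOn a b) t = ∫ s in (0:ℝ)..t, iterInt k (convOn a b) s := rfl
    rw [this]
    rw [intervalIntegral.integral_congr (g := fun s => convOn a (iterInt k b) s)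
      (fun s hs => by
        rw [Set.uIcc_of_le ht] at hs
        exact ih ha hb s hs.1)]
    rw [TRI ha (continuous_iterInt k hb) ht, iterInt_one_comp]

lemma splx_zero {t : ℝ} (ht : 0 ≤ t) : splx 0 t = Set.univ := by
  ext s; simp [splx, ht]

/-- reduction of the (k+3)-fold primitive of a convolution -/
lemma reduce {u h : ℝ → ℂ} (hu : Continuous u) (hh : Continuous h) (k : ℕ) {t : ℝ}
    (ht : 0 ≤ t) :
    iterInt (k+1) (convOn u h) t = convOn (iterInt 1 u) (iterInt k h) t := by
  rw [iterInt_succ_comm]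
  have step1 : Set.EqOn (iterInt 1 (convOn u h)) (convOn (iterInt 1 u) h) (Set.Icc 0 t) := by
    intro s hs
    have e1 : iterInt 1 (convOn u h) s = iterInt 1 (convOn h u) s := by
      show (∫ x in (0:ℝ)..s, convOn u h x) = ∫ x in (0:ℝ)..s, convOn h u x
      exact intervalIntegral.integral_congr fun x _ => convOn_comm u h x
    rw [e1, iterInt_one_eq, TRI hh hu hs.1]
    exact convOn_comm _ _ s
  rw [iterInt_congr k step1 t ⟨ht, le_refl t⟩]
  exact iterInt_convOn k (continuous_iterInt 1 hu) hh t ht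

lemma main : ∀ (n : ℕ) (f : Fin (n+1) → ℝ → ℂ), (∀ i, Continuous (f i)) → ∀ t, 0 ≤ t →
    iterInt (n+2) (iterConv (List.ofFn f)) t =
      ∫ s in splx (n+1) t, ∏ i, iterInt 1 (f i) (s i) := by
  intro n
  induction n with
  | zero =>
    intro f hf t ht
    have hl : List.ofFn f = [f 0] := by simp [List.ofFn_succ]
    rw [hl, slice1 0 ht (fun i => iterInt 1 (f i)) (fun i => continuous_iterInt 1 (hf i))]
    show (∫ x in (0:ℝ)..t, iterInt 1 (f 0) x) = _
    refine intervalIntegral.integral_congr fun x hx => ?_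
    rw [Set.uIcc_of_le ht] at hx
    rw [splx_zero (by linarith [hx.2] : (0:ℝ) ≤ t - x)]
    rw [Measure.restrict_univ]
    simp [volume_pi, Measure.pi_univ, measureReal_def]
  | succ k ih =>
    intro f hf t ht
    have hl : List.ofFn f = f 0 :: List.ofFn (fun i : Fin (k+1) => f i.succ) := List.ofFn_succ
    have hne : List.ofFn (fun i : Fin (k+1) => f i.succ) ≠ [] := by
      rw [List.ofFn_succ]; exact List.cons_ne_nil _ _
    have hhc : Continuous (iterConv (List.ofFn (fun i : Fin (k+1) => f i.succ))) := by
      refine continuous_iterConv fun w hw => ?_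
      rw [List.mem_ofFn] at hw
      obtain ⟨i, rfl⟩ := hw
      exact hf _
    rw [hl, iterConv_cons _ hne, reduce (hf 0) hhc (k+2) ht,
      slice1 (k+1) ht (fun i => iterInt 1 (f i)) (fun i => continuous_iterInt 1 (hf i))]
    show (∫ τ in (0:ℝ)..t, iterInt 1 (f 0) τ *
        iterInt (k+2) (iterConv (List.ofFn fun i : Fin (k+1) => f i.succ)) (t - τ)) = _
    refine intervalIntegral.integral_congr fun x hx => ?_
    rw [Set.uIcc_of_le ht] at hx
    congr 1
    exact ih (fun i => f i.succ) (fun i => hf i.succ) (t - x) (by linarith [hx.2])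

lemma bnd : ∀ (n : ℕ) (f : Fin (n+1) → ℝ → ℂ), (∀ i, Continuous (f i)) → ∀ t, 0 ≤ t →
    ∀ B : ℝ, (∀ i, ∀ s ∈ Set.Icc (0:ℝ) t, ‖iterInt 1 (f i) s‖ ≤ B) →
    ‖iterInt (n+2) (iterConv (List.ofFn f)) t‖ ≤ B^(n+1) * t^(n+1) / (n+1).factorial := by
  intro n
  induction n with
  | zero =>
    intro f hf t ht B hB
    have hl : List.ofFn f = [f 0] := by simp [List.ofFn_succ]
    rw [hl]
    show ‖∫ x in (0:ℝ)..t, iterInt 1 (f 0) x‖ ≤ _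
    have := intervalIntegral.norm_integral_le_of_norm_le_const (C := B)
      (f := fun x => iterInt 1 (f 0) x) (a := 0) (b := t) (fun x hx => by
        rw [Set.uIoc_of_le ht] at hx
        exact hB 0 x ⟨hx.1.le, hx.2⟩)
    simpa [abs_of_nonneg ht] using this
  | succ k ih =>
    intro f hf t ht B hB
    have hB0 : 0 ≤ B := le_trans (norm_nonneg _) (hB 0 0 ⟨le_refl _, ht⟩)
    have hl : List.ofFn f = f 0 :: List.ofFn (fun i : Fin (k+1) => f i.succ) := List.ofFn_succ
    have hne : List.ofFn (fun i : Fin (k+1) => f i.succ) ≠ [] := by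
      rw [List.ofFn_succ]; exact List.cons_ne_nil _ _
    have hhc : Continuous (iterConv (List.ofFn (fun i : Fin (k+1) => f i.succ))) := by
      refine continuous_iterConv fun w hw => ?_
      rw [List.mem_ofFn] at hw
      obtain ⟨i, rfl⟩ := hw
      exact hf _
    rw [hl, iterConv_cons _ hne, reduce (hf 0) hhc (k+2) ht]
    show ‖∫ τ in (0:ℝ)..t, iterInt 1 (f 0) τ *
        iterInt (k+2) (iterConv (List.ofFn fun i : Fin (k+1) => f i.succ)) (t - τ)‖ ≤ _
    have key : ‖∫ τ in (0:ℝ)..t, iterInt 1 (f 0) τ *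
        iterInt (k+2) (iterConv (List.ofFn fun i : Fin (k+1) => f i.succ)) (t - τ)‖ ≤
        |∫ τ in (0:ℝ)..t, B * (B^(k+1) * (t - τ)^(k+1) / (k+1).factorial)| := by
      refine intervalIntegral.norm_integral_le_abs_of_norm_le ?_ ?_
      · rw [Set.uIoc_of_le ht]
        refine (ae_restrict_mem measurableSet_Ioc).mono fun τ hτ => ?_
        rw [norm_mul]
        have h1 : ‖iterInt 1 (f 0) τ‖ ≤ B := hB 0 τ ⟨hτ.1.le, hτ.2⟩
        have h2 : ‖iterInt (k+2) (iterConv (List.ofFn fun i : Fin (k+1) => f i.succ)) (t - τ)‖ ≤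
            B^(k+1) * (t - τ)^(k+1) / (k+1).factorial := by
          refine ih (fun i => f i.succ) (fun i => hf i.succ) (t - τ) (by linarith [hτ.2]) B ?_
          intro i s hs
          exact hB i.succ s ⟨hs.1, by linarith [hs.2, hτ.1]⟩
        exact mul_le_mul h1 h2 (norm_nonneg _) hB0
      · exact (continuous_const.mul ((continuous_const.mul
          ((continuous_const.sub continuous_id).pow (k+1))).div_const _)).intervalIntegrable 0 t
    have hg : (∫ τ in (0:ℝ)..t, B * (B^(k+1) * (t - τ)^(k+1) / ((k+1).factorial : ℝ))) =
        B^(k+2) * t^(k+2) / (k+2).factorial := by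
      have hfun : (fun τ => B * (B^(k+1) * (t - τ)^(k+1) / (((k+1).factorial : ℝ)))) =
          fun τ => (B^(k+2) / ((k+1).factorial : ℝ)) * ((fun x => x^(k+1)) (t - τ)) := by
        funext τ; ring
      rw [hfun, intervalIntegral.integral_const_mul,
        intervalIntegral.integral_comp_sub_left (fun x : ℝ => x^(k+1)) t]
      simp only [sub_self, sub_zero]
      rw [integral_pow, Nat.factorial_succ (k+1), zero_pow (by omega : k+1+1 ≠ 0), sub_zero]
      push_cast
      rw [div_mul_div_comm, div_eq_div_iff (by positivity) (by positivity)]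
      ring
    refine le_trans key ?_
    rw [hg, abs_of_nonneg (by positivity)]

/-- Simplex formula and `1/n!` bound for iterated convolutions of minors
(one-dimensional core of Lemma 7.2, generalizing CNP's Key Lemma 2):
`g^{(−n−1)}(t) = ∫_{Δ_n(t)} F₁(s₁) ⋯ F_n(s_n) ds`, hence
`|g^{(−n−1)}(t)| ≤ Bⁿ tⁿ / n!` for any common bound `B` of the primitives. -/
theorem stmt_16 (r : ℝ) (hr : 0 < r) (n : ℕ) (hn : 1 ≤ n)
    (f : Fin n → ℝ → ℂ) (hf : ∀ i, ContinuousOn (f i) (Set.Icc 0 r))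
    (F : Fin n → ℝ → ℂ) (hF : ∀ i, ∀ t : ℝ, F i t = ∫ s in (0:ℝ)..t, f i s)
    (g : ℝ → ℂ) (hg : g = iterConv (List.ofFn f)) :
    ∀ t ∈ Set.Icc (0:ℝ) r,
      (iterInt (n + 1) g t =
        ∫ s in {s : Fin n → ℝ | (∀ i, 0 ≤ s i) ∧ ∑ i, s i ≤ t}, ∏ i, F i (s i)) ∧
      ∀ B : ℝ, (∀ i, ∀ s ∈ Set.Icc (0:ℝ) t, ‖F i s‖ ≤ B) →
        ‖iterInt (n + 1) g t‖ ≤ B ^ n * t ^ n / n.factorial := by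
  obtain ⟨m, rfl⟩ : ∃ m, n = m + 1 := ⟨n - 1, (Nat.succ_pred_eq_of_pos hn).symm⟩
  intro t ht
  set p : ℝ → ℝ := fun x => max 0 (min r x) with hp
  have hpc : Continuous p := continuous_const.max (continuous_const.min continuous_id)
  have hpmem : ∀ x, p x ∈ Set.Icc (0:ℝ) r :=
    fun x => ⟨le_max_left _ _, max_le hr.le (min_le_left _ _)⟩
  have hpid : ∀ x ∈ Set.Icc (0:ℝ) r, p x = x := by
    rintro x ⟨h0, h1⟩
    rw [hp]; simp only [min_eq_right h1, max_eq_right h0]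
  set f' : Fin (m+1) → ℝ → ℂ := fun i x => f i (p x) with hf'
  have hf'c : ∀ i, Continuous (f' i) := fun i =>
    (hf i).comp_continuous hpc hpmem
  have hEq : ∀ i, Set.EqOn (f i) (f' i) (Set.Icc 0 r) := fun i x hx =>
    (congrArg (f i) (hpid x hx)).symm
  have hFEq : ∀ i, ∀ s ∈ Set.Icc (0:ℝ) r, F i s = iterInt 1 (f' i) s := by
    intro i s hs
    rw [hF i s, iterInt_one_eq]
    refine intervalIntegral.integral_congr fun x hx => ?_
    rw [Set.uIcc_of_le hs.1] at hx
    exact hEq i ⟨hx.1, le_trans hx.2 hs.2⟩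
  have hgEq : Set.EqOn g (iterConv (List.ofFn f')) (Set.Icc 0 r) := fun s hs => by
    rw [hg]; exact iterConv_ofFn_congr (m+1) f f' r hEq s hs
  have hiter : iterInt (m+2) g t = iterInt (m+2) (iterConv (List.ofFn f')) t :=
    iterInt_congr (m+2) hgEq t ht
  have hsi : ∀ s ∈ splx (m+1) t, ∀ i, s i ∈ Set.Icc (0:ℝ) r := by
    rintro s ⟨h0, hsum⟩ i
    refine ⟨h0 i, le_trans (le_trans ?_ hsum) ht.2⟩
    exact Finset.single_le_sum (fun j _ => h0 j) (Finset.mem_univ i)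
  constructor
  · rw [hiter, main m f' hf'c t ht.1]
    show (∫ s in splx (m+1) t, ∏ i, iterInt 1 (f' i) (s i)) =
      ∫ s in splx (m+1) t, ∏ i, F i (s i)
    refine setIntegral_congr_fun (measurableSet_splx _ _) fun s hs => ?_
    exact Finset.prod_congr rfl fun i _ => (hFEq i (s i) (hsi s hs i)).symm
  · intro B hB
    rw [hiter]
    refine bnd m f' hf'c t ht.1 B fun i s hs => ?_
    rw [← hFEq i s ⟨hs.1, le_trans hs.2 ht.2⟩]
    exact hB i s hs
end
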